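/- arXiv:0909.2080 — 10 statements merged into one kernel-verified Lean document; each statement's English description precedes it below -/
import Mathlib

section
/- Let G be a finite abelian group, k ≥ 1 an integer, and a, b ∈ G such that S = a^k b is a zero-sum free sequence over G. If S is not a-smooth, then f(S) = 2k + 1. -/
open Multiset

/-- `S` is zero-sum free: no nonempty subsequence (sub-multiset) of `S` sums to `0`. -/
def ZeroSumFree {G : Type*} [AddCommGroup G] (S : Multiset G) : Prop :=
  ∀ T : Multiset G, T ≤ S → T ≠ 0 → T.sum ≠ 0

/-- `Σ(S)`: the set of elements expressible as the sum of a nonempty subsequence of `S`. -/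
def SubSums {G : Type*} [AddCommGroup G] (S : Multiset G) : Set G :=
  {x | ∃ T : Multiset G, T ≤ S ∧ T ≠ 0 ∧ T.sum = x}

/-- `f(S) = |Σ(S)|`. -/
noncomputable def fseq {G : Type*} [AddCommGroup G] (S : Multiset G) : ℕ :=
  (SubSums S).ncard

/-- `S` is `g`-smooth: `S = (n₁g)(n₂g)⋯(n_lg)` with `1 = n₁ ≤ ⋯ ≤ n_l`,
`n = n₁ + ⋯ + n_l < ord(g)` and `Σ(S) = {g, 2g, …, ng}`. -/
def IsSmoothAt {G : Type*} [AddCommGroup G] (g : G) (S : Multiset G) : Prop :=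
  ∃ ns : List ℕ,
    ns.Pairwise (· ≤ ·) ∧ ns.head? = some 1 ∧
    S = ↑(ns.map (fun n => n • g)) ∧
    ns.sum < addOrderOf g ∧
    SubSums S = {x | ∃ m : ℕ, 1 ≤ m ∧ m ≤ ns.sum ∧ x = m • g}

/-- `S` is smooth if it is `g`-smooth for some `g ∈ G`. -/
def IsSmooth {G : Type*} [AddCommGroup G] (S : Multiset G) : Prop :=
  ∃ g : G, IsSmoothAt g S

lemma mem_subsums_iff {G : Type*} [AddCommGroup G] (k : ℕ) (a b x : G) :
    x ∈ SubSums (replicate k a + {b}) ↔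
      (∃ i, 1 ≤ i ∧ i ≤ k ∧ x = i • a) ∨ (∃ i, i ≤ k ∧ x = i • a + b) := by
  have hrw : replicate k a + {b} = b ::ₘ replicate k a := by
    rw [add_comm, singleton_add]
  classical
  constructor
  · rintro ⟨T, hT, hT0, rfl⟩
    rw [hrw] at hT
    obtain ⟨U, hU⟩ := Multiset.le_iff_exists_add.mp hT
    have hbmem : b ∈ T + U := by rw [← hU]; exact mem_cons_self b _
    rcases mem_add.mp hbmem with hb | hb
    · -- b ∈ T
      have hTe : b ::ₘ T.erase b = T := cons_erase hb
      have h2 : b ::ₘ replicate k a = b ::ₘ (T.erase b + U) := by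
        rw [hU, ← hTe, cons_add, erase_cons_head]
      have h3 : T.erase b + U = replicate k a := (cons_inj_right b).mp h2 |>.symm
      have h4 : T.erase b ≤ replicate k a := h3 ▸ le_add_right _ _
      obtain ⟨i, hik, hi⟩ := le_replicate_iff.mp h4
      right
      refine ⟨i, hik, ?_⟩
      rw [← hTe, sum_cons, hi, sum_replicate, add_comm]
    · -- b ∈ U
      have hTe : b ::ₘ U.erase b = U := cons_erase hb
      have h2 : b ::ₘ replicate k a = b ::ₘ (T + U.erase b) := by
        rw [hU, ← hTe]
        rw [add_comm T, cons_add, add_comm (U.erase b), erase_cons_head]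
      have h3 : T + U.erase b = replicate k a := (cons_inj_right b).mp h2 |>.symm
      have h4 : T ≤ replicate k a := h3 ▸ le_add_right _ _
      obtain ⟨i, hik, hi⟩ := le_replicate_iff.mp h4
      left
      refine ⟨i, ?_, hik, by rw [hi, sum_replicate]⟩
      rcases Nat.eq_zero_or_pos i with h | h
      · exfalso; exact hT0 (by simp [hi, h])
      · exact h
  · rintro (⟨i, hi1, hik, rfl⟩ | ⟨i, hik, rfl⟩)
    · exact ⟨replicate i a, le_trans (replicate_mono a hik) (le_add_right _ _),
        by simp [← card_pos]; omega, sum_replicate i a⟩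
    · refine ⟨replicate i a + {b}, add_le_add (replicate_mono a hik) (le_refl _), ?_, ?_⟩
      · simp [← card_pos]
      · rw [sum_add, sum_replicate, sum_singleton]

/-- Lemma 2.3: if `S = aᵏb` is zero-sum free and not `a`-smooth, then
`f(S) = 2k + 1`. -/
theorem stmt2 {G : Type*} [AddCommGroup G] [Fintype G] (k : ℕ) (hk : 1 ≤ k)
    (a b : G) (hS : ZeroSumFree (replicate k a + {b}))
    (hns : ¬ IsSmoothAt a (replicate k a + {b})) :
    fseq (replicate k a + {b}) = 2 * k + 1 := by
  classical
  have H1 : ∀ m : ℕ, 1 ≤ m → m ≤ k → m • a ≠ 0 := by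
    intro m h1 h2 h0
    obtain ⟨T, hT, hT0, hsum⟩ := (mem_subsums_iff k a b _).mpr (Or.inl ⟨m, h1, h2, rfl⟩)
    exact hS T hT hT0 (hsum.trans h0)
  have H2 : ∀ m : ℕ, m ≤ k → m • a + b ≠ 0 := by
    intro m h2 h0
    obtain ⟨T, hT, hT0, hsum⟩ := (mem_subsums_iff k a b _).mpr (Or.inr ⟨m, h2, rfl⟩)
    exact hS T hT hT0 (hsum.trans h0)
  have key : ∀ i j : ℕ, i ≤ j → j ≤ k → i • a = j • a → i = j := by
    intro i j hij hjk h
    by_contra hne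
    have h2 : i • a + (j - i) • a = j • a := by
      rw [← add_nsmul]; congr 1; omega
    have h3 : (j - i) • a = 0 := by
      have := h2.trans h.symm
      nth_rewrite 2 [← add_zero (i • a)] at this
      exact add_left_cancel this
    exact H1 (j - i) (by omega) (by omega) h3
  -- the crucial disjointness fact
  have disj : ∀ i j : ℕ, 1 ≤ i → i ≤ k → j ≤ k → i • a ≠ j • a + b := by
    intro i j hi1 hik hjk heq
    rcases le_or_gt i j with hij | hij
    · -- then (j-i) • a + b = 0, contradiction with H2
      have h2 : i • a + ((j - i) • a + b) = i • a + 0 := by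
        rw [← add_assoc, ← add_nsmul, add_zero]
        have hji : i + (j - i) = j := by omega
        rw [hji, ← heq]
      exact H2 (j - i) (by omega) (add_left_cancel h2)
    · -- b = (i - j) • a with 1 ≤ i - j ≤ k : S is a-smooth, contradiction
      exfalso; apply hns
      set c := i - j with hc
      have hc1 : 1 ≤ c := by omega
      have hck : c ≤ k := by omega
      have hb : b = c • a := by
        have h2 : j • a + c • a = j • a + b := by
          rw [← add_nsmul]
          rw [← heq]; congr 1; omega
        exact (add_left_cancel h2).symm
      have mem_cover : ∀ m : ℕ, 1 ≤ m → m ≤ k + c →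
          m • a ∈ SubSums (replicate k a + {b}) := by
        intro m h1 h2
        rcases le_or_gt m k with h | h
        · exact (mem_subsums_iff k a b _).mpr (Or.inl ⟨m, h1, h, rfl⟩)
        · refine (mem_subsums_iff k a b _).mpr (Or.inr ⟨m - c, by omega, ?_⟩)
          rw [hb, ← add_nsmul]; congr 1; omega
      have ne0 : ∀ m : ℕ, 1 ≤ m → m ≤ k + c → m • a ≠ 0 := by
        intro m h1 h2 h0
        obtain ⟨T, hT, hT0, hsum⟩ := mem_cover m h1 h2
        exact hS T hT hT0 (hsum.trans h0)
      refine ⟨List.replicate k 1 ++ [c], ?_, ?_, ?_, ?_, ?_⟩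
      · -- sorted
        rw [List.pairwise_append]
        refine ⟨?_, by simp, ?_⟩
        · have hpair : ∀ m : ℕ, (List.replicate m 1).Pairwise (fun x y : ℕ => x ≤ y) := by
            intro m
            induction m with
            | zero => simp
            | succ n ihn =>
              rw [List.replicate_succ, List.pairwise_cons]
              exact ⟨fun y hy => le_of_eq (List.eq_of_mem_replicate hy).symm, ihn⟩
          exact hpair k
        · intro x hx y hy
          rw [List.eq_of_mem_replicate hx]
          simp at hy
          omega
      · -- head
        obtain ⟨k', rfl⟩ : ∃ k', k = k' + 1 := ⟨k - 1, by omega⟩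
        simp [List.replicate_succ]
      · -- S = map
        have hmap : (List.replicate k 1 ++ [c]).map (fun n => n • a)
            = List.replicate k a ++ [c • a] := by
          simp [List.map_replicate]
        rw [hmap, hb]
        rw [← Multiset.coe_add, Multiset.coe_replicate]
        rfl
      · -- sum < order
        have hsum_ns : (List.replicate k 1 ++ [c]).sum = k + c := by
          simp [List.sum_replicate]
        rw [hsum_ns]
        by_contra hle
        push_neg at hle
        exact ne0 (addOrderOf a) (addOrderOf_pos a) hle (addOrderOf_nsmul_eq_zero a)
      · -- SubSums equality
        have hsum_ns : (List.replicate k 1 ++ [c]).sum = k + c := by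
          simp [List.sum_replicate]
        rw [hsum_ns]
        ext x
        rw [Set.mem_setOf_eq, mem_subsums_iff k a b x]
        constructor
        · rintro (⟨i, h1, h2, rfl⟩ | ⟨i, h2, rfl⟩)
          · exact ⟨i, h1, by omega, rfl⟩
          · exact ⟨i + c, by omega, by omega, by rw [hb, add_nsmul]⟩
        · rintro ⟨m, h1, h2, rfl⟩
          rcases le_or_gt m k with h | h
          · exact Or.inl ⟨m, h1, h, rfl⟩
          · refine Or.inr ⟨m - c, by omega, ?_⟩
            rw [hb, ← add_nsmul]; congr 1; omega
  -- counting
  have hset : SubSums (replicate k a + {b}) =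
      ↑(((Finset.Icc 1 k).image (fun i : ℕ => i • a)) ∪
        ((Finset.Icc 0 k).image (fun i : ℕ => i • a + b))) := by
    ext x
    rw [mem_subsums_iff k a b x]
    simp only [Finset.coe_union, Set.mem_union, Finset.coe_image, Set.mem_image,
      Finset.mem_coe, Finset.mem_Icc]
    constructor
    · rintro (⟨i, h1, h2, rfl⟩ | ⟨i, h2, rfl⟩)
      · exact Or.inl ⟨i, ⟨h1, h2⟩, rfl⟩
      · exact Or.inr ⟨i, ⟨Nat.zero_le _, h2⟩, rfl⟩
    · rintro (⟨i, ⟨h1, h2⟩, rfl⟩ | ⟨i, ⟨_, h2⟩, rfl⟩)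
      · exact Or.inl ⟨i, h1, h2, rfl⟩
      · exact Or.inr ⟨i, h2, rfl⟩
  have hdisj : Disjoint ((Finset.Icc 1 k).image (fun i : ℕ => i • a))
      ((Finset.Icc 0 k).image (fun i : ℕ => i • a + b)) := by
    rw [Finset.disjoint_left]
    rintro x hx hy
    obtain ⟨i, hi, rfl⟩ := Finset.mem_image.mp hx
    obtain ⟨j, hj, hj2⟩ := Finset.mem_image.mp hy
    rw [Finset.mem_Icc] at hi hj
    exact disj i j hi.1 hi.2 hj.2 hj2.symm
  have hinj1 : Set.InjOn (fun i : ℕ => i • a) ↑(Finset.Icc 1 k) := by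
    intro i hi j hj h
    simp only [Finset.coe_Icc, Set.mem_Icc] at hi hj
    rcases le_total i j with hij | hij
    · exact key i j hij hj.2 h
    · exact (key j i hij hi.2 h.symm).symm
  have hinj2 : Set.InjOn (fun i : ℕ => i • a + b) ↑(Finset.Icc 0 k) := by
    intro i hi j hj h
    simp only [Finset.coe_Icc, Set.mem_Icc] at hi hj
    have h' : i • a = j • a := by
      have := h
      simp only at this
      exact add_right_cancel this
    rcases le_total i j with hij | hij
    · exact key i j hij hj.2 h'
    · exact (key j i hij hi.2 h'.symm).symm
  rw [fseq, hset, Set.ncard_coe_finset,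
    Finset.card_union_of_disjoint hdisj,
    Finset.card_image_of_injOn hinj1, Finset.card_image_of_injOn hinj2]
  simp [Nat.card_Icc]
  omega
end

section
/- Let k ≥ l ≥ 2 be integers and let a, b be two distinct elements of a finite abelian group G such that a^k b^l is zero-sum free and a^k b^l is not smooth. If 2a ≠ 2b, then f(a^k b^l) ≥ 2(k + l). -/
open Multiset

/-- Representability: every `m ≤ k + l*u` is `i + j*u` with `i ≤ k`, `j ≤ l`,
provided `1 ≤ u ≤ k`. -/
lemma rep_lemma (u k : ℕ) (hu : 1 ≤ u) (huk : u ≤ k) :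
    ∀ l m : ℕ, m ≤ k + l * u → ∃ i j : ℕ, i ≤ k ∧ j ≤ l ∧ m = i + j * u := by
  intro l
  induction l with
  | zero => intro m hm; exact ⟨m, 0, by simpa using hm, le_rfl, by simp⟩
  | succ n ih =>
    intro m hm
    by_cases h : m ≤ k + n * u
    · obtain ⟨i, j, h1, h2, h3⟩ := ih m h
      exact ⟨i, j, h1, by omega, h3⟩
    · push_neg at h
      have hsm : (n + 1) * u = n * u + u := Nat.succ_mul n u
      rw [hsm] at hm
      refine ⟨m - (n * u + u), n + 1, ?_, le_rfl, ?_⟩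
      · generalize hc : n * u = c at hm h
        omega
      · rw [hsm]
        generalize hc : n * u = c at hm h ⊢
        omega

/-- Description of the subsequence sums of `aᵏbˡ`. -/
lemma subsums_eq {G : Type*} [AddCommGroup G] (k l : ℕ) (a b : G) (hab : a ≠ b) :
    SubSums (replicate k a + replicate l b) =
      {x | ∃ i j : ℕ, i ≤ k ∧ j ≤ l ∧ 1 ≤ i + j ∧ x = i • a + j • b} := by
  classical
  ext x
  simp only [SubSums, Set.mem_setOf_eq]
  constructor
  · rintro ⟨T, hT, hT0, rfl⟩
    have hca : T.count a ≤ k := by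
      have h := Multiset.count_le_of_le a hT
      simpa [Multiset.count_replicate, hab.symm] using h
    have hcb : T.count b ≤ l := by
      have h := Multiset.count_le_of_le b hT
      simpa [Multiset.count_replicate, hab] using h
    have hTeq : T = replicate (T.count a) a + replicate (T.count b) b := by
      ext y
      rw [Multiset.count_add, Multiset.count_replicate, Multiset.count_replicate]
      by_cases h1 : a = y
      · subst h1
        rw [if_pos rfl, if_neg (Ne.symm hab), add_zero]
      · by_cases h2 : b = y
        · subst h2
          rw [if_neg h1, if_pos rfl, zero_add]
        · rw [if_neg h1, if_neg h2, add_zero]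
          have h := Multiset.count_le_of_le y hT
          rw [Multiset.count_add, Multiset.count_replicate, Multiset.count_replicate,
            if_neg h1, if_neg h2] at h
          omega
    refine ⟨T.count a, T.count b, hca, hcb, ?_, ?_⟩
    · have hcard : Multiset.card T = T.count a + T.count b := by
        conv_lhs => rw [hTeq]
        rw [Multiset.card_add, Multiset.card_replicate, Multiset.card_replicate]
      have hc0 : Multiset.card T ≠ 0 := by simpa using hT0
      omega
    · conv_lhs => rw [hTeq]
      rw [Multiset.sum_add, Multiset.sum_replicate, Multiset.sum_replicate]
  · rintro ⟨i, j, hi, hj, hij, rfl⟩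
    refine ⟨replicate i a + replicate j b,
      add_le_add ((Multiset.replicate_le_replicate a).2 hi)
        ((Multiset.replicate_le_replicate b).2 hj), ?_, ?_⟩
    · intro h
      apply_fun Multiset.card at h
      simp at h
      omega
    · rw [Multiset.sum_add, Multiset.sum_replicate, Multiset.sum_replicate]

/-- If `b = u • a` with `2 ≤ u ≤ k` then `aᵏbˡ` is `a`-smooth. -/
lemma smooth_aux {G : Type*} [AddCommGroup G] [Fintype G] (k l u : ℕ) (a : G)
    (hk : 1 ≤ k) (hu : 2 ≤ u) (huk : u ≤ k)
    (hzsf : ∀ i j : ℕ, i ≤ k → j ≤ l → 1 ≤ i + j → i • a + j • (u • a) ≠ 0) :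
    IsSmoothAt a (replicate k a + replicate l (u • a)) := by
  have hu1 : 1 ≤ u := by omega
  have hne : a ≠ u • a := by
    intro h
    have h1 : (u - 1) • a + 0 • (u • a) ≠ 0 :=
      hzsf (u - 1) 0 (by omega) (Nat.zero_le l) (by omega)
    apply h1
    rw [zero_smul, add_zero]
    have h2 : u • a = a + (u - 1) • a := by
      calc u • a = (1 + (u - 1)) • a := by congr 1; omega
        _ = a + (u - 1) • a := by rw [add_nsmul, one_nsmul]
    exact left_eq_add.mp (h.trans h2)
  have hmd : ∀ m : ℕ, 1 ≤ m → m ≤ k + l * u → m • a ≠ 0 := by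
    intro m h1 h2 h0
    obtain ⟨i, j, hi, hj, rfl⟩ := rep_lemma u k hu1 huk l m h2
    have hij : 1 ≤ i + j := by
      by_contra hc
      push_neg at hc
      have hi0 : i = 0 := by omega
      have hj0 : j = 0 := by omega
      subst hi0; subst hj0
      simp at h1
    apply hzsf i j hi hj hij
    rw [smul_smul, ← add_nsmul]
    exact h0
  have hsum : (List.replicate k 1 ++ List.replicate l u).sum = k + l * u := by
    simp [List.sum_replicate, smul_eq_mul]
  refine ⟨List.replicate k 1 ++ List.replicate l u, ?_, ?_, ?_, ?_, ?_⟩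
  · refine List.pairwise_append.2 ⟨?_, ?_, ?_⟩
    · exact List.pairwise_replicate.2 (Or.inr le_rfl)
    · exact List.pairwise_replicate.2 (Or.inr le_rfl)
    · intro x hx y hy
      rw [List.eq_of_mem_replicate hx, List.eq_of_mem_replicate hy]
      exact hu1
  · obtain ⟨k', rfl⟩ : ∃ k', k = k' + 1 := ⟨k - 1, by omega⟩
    simp [List.replicate_succ]
  · rw [List.map_append, List.map_replicate, List.map_replicate, ← Multiset.coe_add,
      Multiset.coe_replicate, Multiset.coe_replicate, one_nsmul]
  · rw [hsum]
    by_contra hcon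
    push_neg at hcon
    exact hmd (addOrderOf a) (addOrderOf_pos a) hcon (addOrderOf_nsmul_eq_zero a)
  · rw [hsum, subsums_eq k l a (u • a) hne]
    ext x
    simp only [Set.mem_setOf_eq]
    constructor
    · rintro ⟨i, j, hi, hj, hij, rfl⟩
      refine ⟨i + j * u, ?_, ?_, ?_⟩
      · have h5 : j ≤ j * u := Nat.le_mul_of_pos_right j (by omega)
        exact le_trans hij (Nat.add_le_add_left h5 i)
      · exact Nat.add_le_add hi (Nat.mul_le_mul hj le_rfl)
      · rw [smul_smul, add_nsmul]
    · rintro ⟨m, h1m, h2m, rfl⟩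
      obtain ⟨i, j, hi, hj, rfl⟩ := rep_lemma u k hu1 huk l m h2m
      refine ⟨i, j, hi, hj, ?_, ?_⟩
      · by_contra hc
        push_neg at hc
        have hi0 : i = 0 := by omega
        have hj0 : j = 0 := by omega
        subst hi0; subst hj0
        simp at h1m
      · rw [smul_smul, add_nsmul]

/-- Lemma 2.5(i): `k ≥ l ≥ 2`, `a ≠ b`, `aᵏbˡ` zero-sum free and not smooth,
`2a ≠ 2b` imply `f(aᵏbˡ) ≥ 2(k + l)`. -/
theorem stmt3 {G : Type*} [AddCommGroup G] [Fintype G] (k l : ℕ)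
    (hl : 2 ≤ l) (hkl : l ≤ k) (a b : G) (hab : a ≠ b)
    (hS : ZeroSumFree (replicate k a + replicate l b))
    (hns : ¬ IsSmooth (replicate k a + replicate l b))
    (h2 : 2 • a ≠ 2 • b) :
    2 * (k + l) ≤ fseq (replicate k a + replicate l b) := by
  classical
  have hk1 : 1 ≤ k := by omega
  have hl1 : 1 ≤ l := by omega
  -- zero-sum freeness in coordinates
  have zsf : ∀ i j : ℕ, i ≤ k → j ≤ l → 1 ≤ i + j → i • a + j • b ≠ 0 := by
    intro i j hi hj hij h0
    refine hS (replicate i a + replicate j b)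
      (add_le_add ((Multiset.replicate_le_replicate a).2 hi)
        ((Multiset.replicate_le_replicate b).2 hj)) ?_ ?_
    · intro h
      apply_fun Multiset.card at h
      simp at h
      omega
    · rw [Multiset.sum_add, Multiset.sum_replicate, Multiset.sum_replicate]
      exact h0
  -- collisions produce relations (one-sided version)
  have step : ∀ i j i' j' : ℕ, i' ≤ k → j ≤ l → j' ≤ l →
      i • a + j • b = i' • a + j' • b → i < i' →
      ∃ u d, 1 ≤ u ∧ u ≤ k ∧ 1 ≤ d ∧ d ≤ l ∧ u • a = d • b ∧ i + u = i' ∧ j' + d = j := by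
    intro i j i' j' hi' hj hj' heq hlt
    obtain ⟨u, hu1, rfl⟩ : ∃ u, 1 ≤ u ∧ i' = i + u := ⟨i' - i, by omega, by omega⟩
    have huk : u ≤ k := by omega
    rcases le_or_gt j j' with hle | hgt
    · exfalso
      obtain ⟨e, rfl⟩ : ∃ e, j' = j + e := ⟨j' - j, by omega⟩
      have h0 : u • a + e • b = 0 := by
        have h := heq
        rw [add_nsmul, add_nsmul] at h
        calc u • a + e • b
            = (i • a + u • a + (j • b + e • b)) - (i • a + j • b) := by abel
          _ = 0 := by rw [← h]; abel
      exact zsf u e huk (by omega) (by omega) h0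
    · obtain ⟨d, hd1, rfl⟩ : ∃ d, 1 ≤ d ∧ j = j' + d := ⟨j - j', by omega, by omega⟩
      refine ⟨u, d, hu1, huk, hd1, by omega, ?_, rfl, rfl⟩
      have h := heq
      rw [add_nsmul, add_nsmul] at h
      calc u • a = (i • a + u • a + j' • b) - (i • a + j' • b) := by abel
        _ = (i • a + (j' • b + d • b)) - (i • a + j' • b) := by rw [← h]
        _ = d • b := by abel
  -- the full collision lemma
  have collide : ∀ p q : ℕ × ℕ, p.1 ≤ k → p.2 ≤ l → q.1 ≤ k → q.2 ≤ l →
      p.1 • a + p.2 • b = q.1 • a + q.2 • b → p ≠ q →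
      ∃ u d, 1 ≤ u ∧ u ≤ k ∧ 1 ≤ d ∧ d ≤ l ∧ u • a = d • b ∧
        ((p.1 + u = q.1 ∧ q.2 + d = p.2) ∨ (q.1 + u = p.1 ∧ p.2 + d = q.2)) := by
    rintro ⟨i, j⟩ ⟨i', j'⟩ hi hj hi' hj' heq hne
    simp only at *
    rcases lt_trichotomy i i' with h | h | h
    · obtain ⟨u, d, c1, c2, c3, c4, c5, c6, c7⟩ := step i j i' j' hi' hj hj' heq h
      exact ⟨u, d, c1, c2, c3, c4, c5, Or.inl ⟨c6, c7⟩⟩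
    · exfalso
      subst h
      have hjj : j ≠ j' := by
        intro hc
        exact hne (by rw [hc])
      have hb : j • b = j' • b := by
        have := heq
        exact add_left_cancel this
      rcases lt_or_gt_of_ne hjj with h | h
      · obtain ⟨e, he1, rfl⟩ : ∃ e, 1 ≤ e ∧ j' = j + e := ⟨j' - j, by omega, by omega⟩
        have h0 : e • b = 0 := by
          rw [add_nsmul] at hb
          calc e • b = (j • b + e • b) - j • b := by abel
            _ = 0 := by rw [← hb]; abel
        exact zsf 0 e (Nat.zero_le k) (by omega) (by omega) (by simpa using h0)
      · obtain ⟨e, he1, rfl⟩ : ∃ e, 1 ≤ e ∧ j = j' + e := ⟨j - j', by omega, by omega⟩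
        have h0 : e • b = 0 := by
          rw [add_nsmul] at hb
          calc e • b = (j' • b + e • b) - j' • b := by abel
            _ = 0 := by rw [hb]; abel
        exact zsf 0 e (Nat.zero_le k) (by omega) (by omega) (by simpa using h0)
    · obtain ⟨u, d, c1, c2, c3, c4, c5, c6, c7⟩ := step i' j' i j hi hj' hj heq.symm h
      exact ⟨u, d, c1, c2, c3, c4, c5, Or.inr ⟨c6, c7⟩⟩
  -- main counting device
  have key : ∀ u0 d0 : ℕ, 1 ≤ u0 → u0 ≤ k + 1 → 1 ≤ d0 → d0 ≤ l + 1 →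
      (∀ u d, 1 ≤ u → u ≤ k → 1 ≤ d → d ≤ l → u • a = d • b → u0 ≤ u ∧ d0 ≤ d) →
      2 * (k + l) + 1 ≤ u0 * (l + 1) + (k + 1 - u0) * d0 →
      2 * (k + l) ≤ fseq (replicate k a + replicate l b) := by
    intro u0 d0 hu01 hu0k hd01 hd0l hmin harith
    set s0 : Finset (ℕ × ℕ) :=
      (Finset.range u0 ×ˢ Finset.range (l + 1)) ∪
        (Finset.Ico u0 (k + 1) ×ˢ Finset.Ico (l + 1 - d0) (l + 1)) with hs0
    have hmem : ∀ p : ℕ × ℕ, p ∈ s0 ↔ p.1 ≤ k ∧ p.2 ≤ l ∧ (p.1 < u0 ∨ l < p.2 + d0) := by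
      intro p
      simp only [hs0, Finset.mem_union, Finset.mem_product, Finset.mem_range, Finset.mem_Ico]
      omega
    have h00 : ((0, 0) : ℕ × ℕ) ∈ s0 := (hmem _).2 (by simp; omega)
    have hdis : Disjoint (Finset.range u0 ×ˢ Finset.range (l + 1))
        (Finset.Ico u0 (k + 1) ×ˢ Finset.Ico (l + 1 - d0) (l + 1)) := by
      rw [Finset.disjoint_left]
      rintro ⟨x, y⟩ hx hy
      simp only [Finset.mem_product, Finset.mem_range, Finset.mem_Ico] at hx hy
      omega
    have hcard0 : s0.card = u0 * (l + 1) + (k + 1 - u0) * d0 := by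
      rw [hs0, Finset.card_union_of_disjoint hdis, Finset.card_product, Finset.card_product,
        Finset.card_range, Finset.card_range, Nat.card_Ico, Nat.card_Ico]
      have hd : l + 1 - (l + 1 - d0) = d0 := by omega
      rw [hd]
    set s : Finset (ℕ × ℕ) := s0.erase (0, 0) with hs
    set φ : ℕ × ℕ → G := fun p => p.1 • a + p.2 • b with hφ
    have hinj : Set.InjOn φ ↑s := by
      rintro p hp q hq heq
      by_contra hne
      have hp' := (hmem p).1 (Finset.mem_of_mem_erase hp)
      have hq' := (hmem q).1 (Finset.mem_of_mem_erase hq)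
      obtain ⟨u, d, hu1, huk, hd1, hdl, hrel, hcase⟩ :=
        collide p q hp'.1 hp'.2.1 hq'.1 hq'.2.1 heq hne
      obtain ⟨hu0, hd0⟩ := hmin u d hu1 huk hd1 hdl hrel
      obtain ⟨hpk, hpl, hpor⟩ := hp'
      obtain ⟨hqk, hql, hqor⟩ := hq'
      rcases hcase with ⟨e1, e2⟩ | ⟨e1, e2⟩
      · rcases hqor with h3 | h3 <;> omega
      · rcases hpor with h3 | h3 <;> omega
    have himg : ↑(s.image φ) ⊆ SubSums (replicate k a + replicate l b) := by
      intro x hx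
      simp only [Finset.coe_image, Set.mem_image, Finset.mem_coe] at hx
      obtain ⟨p, hp, rfl⟩ := hx
      have hp0 : p ≠ (0, 0) := Finset.ne_of_mem_erase hp
      have hp' := (hmem p).1 (Finset.mem_of_mem_erase hp)
      refine ⟨replicate p.1 a + replicate p.2 b,
        add_le_add ((Multiset.replicate_le_replicate a).2 hp'.1)
          ((Multiset.replicate_le_replicate b).2 hp'.2.1), ?_, ?_⟩
      · intro h
        apply_fun Multiset.card at h
        simp at h
        exact hp0 (Prod.ext h.1 h.2)
      · rw [Multiset.sum_add, Multiset.sum_replicate, Multiset.sum_replicate]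
    have hfin : (SubSums (replicate k a + replicate l b)).Finite := Set.toFinite _
    have hle := Set.ncard_le_ncard himg hfin
    rw [Set.ncard_coe_finset, Finset.card_image_of_injOn hinj] at hle
    have hgoal : 2 * (k + l) + 1 ≤ s0.card := by rw [hcard0]; exact harith
    have hcard1 : s.card = s0.card - 1 := Finset.card_erase_of_mem h00
    show 2 * (k + l) ≤ (SubSums (replicate k a + replicate l b)).ncard
    omega
  by_cases hex : ∃ u d : ℕ, (1 ≤ u ∧ u ≤ k) ∧ (1 ≤ d ∧ d ≤ l) ∧ u • a = d • b
  · -- there is a relation; take minimal `u0` and `d0`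
    have hPex : ∃ u : ℕ, ∃ d : ℕ, (1 ≤ u ∧ u ≤ k) ∧ (1 ≤ d ∧ d ≤ l) ∧ u • a = d • b := hex
    have hQex : ∃ d : ℕ, ∃ u : ℕ, (1 ≤ u ∧ u ≤ k) ∧ (1 ≤ d ∧ d ≤ l) ∧ u • a = d • b := by
      obtain ⟨u, d, h⟩ := hex; exact ⟨d, u, h⟩
    obtain ⟨u0, hPu0, hu0min'⟩ :
        ∃ u0, (∃ d : ℕ, (1 ≤ u0 ∧ u0 ≤ k) ∧ (1 ≤ d ∧ d ≤ l) ∧ u0 • a = d • b) ∧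
          ∀ u, (∃ d : ℕ, (1 ≤ u ∧ u ≤ k) ∧ (1 ≤ d ∧ d ≤ l) ∧ u • a = d • b) → u0 ≤ u :=
      ⟨Nat.find hPex, Nat.find_spec hPex, fun u h => Nat.find_min' hPex h⟩
    obtain ⟨d0, hQd0, hd0min'⟩ :
        ∃ d0, (∃ u : ℕ, (1 ≤ u ∧ u ≤ k) ∧ (1 ≤ d0 ∧ d0 ≤ l) ∧ u • a = d0 • b) ∧
          ∀ d, (∃ u : ℕ, (1 ≤ u ∧ u ≤ k) ∧ (1 ≤ d ∧ d ≤ l) ∧ u • a = d • b) → d0 ≤ d :=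
      ⟨Nat.find hQex, Nat.find_spec hQex, fun d h => Nat.find_min' hQex h⟩
    have hu0min : ∀ u d : ℕ, (1 ≤ u ∧ u ≤ k) → (1 ≤ d ∧ d ≤ l) → u • a = d • b → u0 ≤ u := by
      intro u d h1 h3 h5
      exact hu0min' u ⟨d, h1, h3, h5⟩
    have hd0min : ∀ u d : ℕ, (1 ≤ u ∧ u ≤ k) → (1 ≤ d ∧ d ≤ l) → u • a = d • b → d0 ≤ d := by
      intro u d h1 h3 h5
      exact hd0min' d ⟨u, h1, h3, h5⟩
    obtain ⟨dA, ⟨hu01, hu0k⟩, ⟨hdA1, hdAl⟩, hrelA⟩ := hPu0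
    obtain ⟨uB, ⟨huB1, huBk⟩, ⟨hd01, hd0l⟩, hrelB⟩ := hQd0
    have hle1 : u0 ≤ uB := hu0min uB d0 ⟨huB1, huBk⟩ ⟨hd01, hd0l⟩ hrelB
    have hle2 : d0 ≤ dA := hd0min u0 dA ⟨hu01, hu0k⟩ ⟨hdA1, hdAl⟩ hrelA
    have hrel0 : u0 • a = d0 • b := by
      obtain ⟨u', rfl⟩ : ∃ u', uB = u0 + u' := ⟨uB - u0, by omega⟩
      obtain ⟨d', rfl⟩ : ∃ d', dA = d0 + d' := ⟨dA - d0, by omega⟩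
      by_cases hz : u' = 0 ∧ d' = 0
      · obtain ⟨rfl, rfl⟩ := hz
        simpa using hrelB
      · exfalso
        have h0 : u' • a + d' • b = 0 := by
          calc u' • a + d' • b
              = ((u0 + u') • a + (d0 + d') • b) - (u0 • a + d0 • b) := by
                rw [add_nsmul, add_nsmul]; abel
            _ = (d0 • b + u0 • a) - (u0 • a + d0 • b) := by rw [hrelB, hrelA]
            _ = 0 := by abel
        exact zsf u' d' (by omega) (by omega) (by omega) h0
    by_cases hu0e : u0 = 1
    · by_cases hd0e : d0 = 1
      · exact absurd (by simpa [hu0e, hd0e] using hrel0) hab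
      · -- a = d0 • b : smooth at b
        exfalso
        apply hns
        refine ⟨b, ?_⟩
        have hba : a = d0 • b := by simpa [hu0e] using hrel0
        have hcomm : replicate k a + replicate l b = replicate l b + replicate k (d0 • b) := by
          rw [← hba, add_comm]
        rw [hcomm]
        refine smooth_aux l k d0 b hl1 (by omega) hd0l ?_
        intro i j hi hj hij
        intro h
        apply zsf j i hj hi (by omega)
        rw [hba]
        calc (j : ℕ) • (d0 • b) + i • b = i • b + j • (d0 • b) := add_comm _ _
          _ = 0 := h
    · by_cases hd0e : d0 = 1
      · -- b = u0 • a : smooth at a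
        exfalso
        apply hns
        refine ⟨a, ?_⟩
        have hba : b = u0 • a := by
          have := hrel0
          rw [hd0e, one_nsmul] at this
          exact this.symm
        rw [hba]
        refine smooth_aux k l u0 a hk1 (by omega) hu0k ?_
        intro i j hi hj hij
        have := zsf i j hi hj hij
        rw [hba] at this
        exact this
      · by_cases hud : u0 = 2 ∧ d0 = 2
        · exact absurd (by simpa [hud.1, hud.2] using hrel0) h2
        · refine key u0 d0 (by omega) (by omega) (by omega) (by omega) ?_ ?_
          · intro u d h1 h2' h3 h4 h5
            exact ⟨hu0min u d ⟨h1, h2'⟩ ⟨h3, h4⟩ h5, hd0min u d ⟨h1, h2'⟩ ⟨h3, h4⟩ h5⟩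
          · have c1 : 2 ≤ u0 := by omega
            have c2 : 2 ≤ d0 := by omega
            have hcase : 3 ≤ u0 ∨ 3 ≤ d0 := by omega
            zify [show u0 ≤ k + 1 from by omega]
            have z1 : (2 : ℤ) ≤ (u0 : ℤ) := by exact_mod_cast c1
            have z2 : (u0 : ℤ) ≤ (k : ℤ) := by exact_mod_cast hu0k
            have z3 : (2 : ℤ) ≤ (d0 : ℤ) := by exact_mod_cast c2
            have z4 : (d0 : ℤ) ≤ (l : ℤ) := by exact_mod_cast hd0l
            have z5 : (2 : ℤ) ≤ (l : ℤ) := by exact_mod_cast hl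
            have z6 : (l : ℤ) ≤ (k : ℤ) := by exact_mod_cast hkl
            rcases hcase with h3 | h3
            · have z7 : (3 : ℤ) ≤ (u0 : ℤ) := by exact_mod_cast h3
              nlinarith [mul_nonneg (by linarith : (0:ℤ) ≤ (d0:ℤ) - 2)
                  (by linarith : (0:ℤ) ≤ (k:ℤ) + 1 - (u0:ℤ)),
                mul_nonneg (by linarith : (0:ℤ) ≤ (u0:ℤ) - 3)
                  (by linarith : (0:ℤ) ≤ (l:ℤ) - 1)]
            · have z7 : (3 : ℤ) ≤ (d0 : ℤ) := by exact_mod_cast h3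
              nlinarith [mul_nonneg (by linarith : (0:ℤ) ≤ (u0:ℤ) - 2)
                  (by linarith : (0:ℤ) ≤ (l:ℤ) + 1 - (d0:ℤ)),
                mul_nonneg (by linarith : (0:ℤ) ≤ (d0:ℤ) - 3)
                  (by linarith : (0:ℤ) ≤ (k:ℤ) - 1)]
  · -- no relation at all
    refine key (k + 1) (l + 1) (by omega) le_rfl (by omega) le_rfl ?_ ?_
    · intro u d h1 h2' h3 h4 h5
      exact absurd ⟨u, d, ⟨h1, h2'⟩, ⟨h3, h4⟩, h5⟩ hex
    · have hz : k + 1 - (k + 1) = 0 := Nat.sub_self _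
      rw [hz, zero_mul, add_zero]
      have h1 : 2 * k ≤ k * l := by nlinarith
      nlinarith
end

section
/- Let k ≥ l ≥ 2 be integers and let a, b be two distinct elements of a finite abelian group G such that a^k b^l is zero-sum free and a^k b^l is not smooth. If 2a = 2b, then f(a^k b^l) = 2(k + l) − 1. -/
open Multiset

private lemma exists_ij (k l s t : ℕ) (hk : 1 ≤ k) (hl1 : 1 ≤ l) (ht : t ≤ l)
    (h1 : 1 ≤ s) (h2 : s ≤ k + t) :
    ∃ i j : ℕ, i ≤ k ∧ j ≤ l ∧ i + j = s ∧ j % 2 = t % 2 := by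
  rcases Nat.mod_two_eq_zero_or_one t with h | h
  · by_cases hs : s ≤ k
    · exact ⟨s, 0, by omega, by omega, by omega, by omega⟩
    · by_cases hp : (s - k) % 2 = 0
      · exact ⟨k, s - k, by omega, by omega, by omega, by omega⟩
      · exact ⟨k - 1, s - k + 1, by omega, by omega, by omega, by omega⟩
  · by_cases hs : s ≤ k
    · exact ⟨s - 1, 1, by omega, by omega, by omega, by omega⟩
    · by_cases hp : (s - k) % 2 = 1
      · exact ⟨k, s - k, by omega, by omega, by omega, by omega⟩
      · exact ⟨k - 1, s - k + 1, by omega, by omega, by omega, by omega⟩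

private lemma smul_decomp {G : Type*} [AddCommGroup G] (a d : G) (hd2 : 2 • d = 0) (i j : ℕ) :
    i • a + j • (a + d) = (i + j) • a + (j % 2) • d := by
  have hj : j = 2 * (j / 2) + j % 2 := (Nat.div_add_mod j 2).symm
  have h1 : j • d = (j % 2) • d := by
    conv_lhs => rw [hj]
    rw [add_nsmul, mul_nsmul, hd2, smul_zero, zero_add]
    
  rw [smul_add, h1, add_nsmul, add_assoc]

/-- Lemma 2.5(ii): `k ≥ l ≥ 2`, `a ≠ b`, `aᵏbˡ` zero-sum free and not smooth,
`2a = 2b` imply `f(aᵏbˡ) = 2(k + l) - 1`. -/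
theorem stmt4 {G : Type*} [AddCommGroup G] [Fintype G] (k l : ℕ)
    (hl : 2 ≤ l) (hkl : l ≤ k) (a b : G) (hab : a ≠ b)
    (hS : ZeroSumFree (replicate k a + replicate l b))
    (hns : ¬ IsSmooth (replicate k a + replicate l b))
    (h2 : 2 • a = 2 • b) :
    fseq (replicate k a + replicate l b) = 2 * (k + l) - 1 := by
  classical
  set d : G := b - a with hddef
  have hd0 : d ≠ 0 := sub_ne_zero.mpr (Ne.symm hab)
  have hd2 : 2 • d = 0 := by
    rw [hddef, smul_sub, h2, sub_self]
  have hb : b = a + d := by rw [hddef]; abel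
  have hk1 : 1 ≤ k := by omega
  set S : Multiset G := replicate k a + replicate l b with hSdef
  -- membership characterization
  have hmem : ∀ x : G, x ∈ SubSums S ↔
      ∃ i j : ℕ, i ≤ k ∧ j ≤ l ∧ 1 ≤ i + j ∧ x = i • a + j • b := by
    intro x
    constructor
    · rintro ⟨T, hTS, hT0, hTsum⟩
      have hca : count a S = k := by
        simp [hSdef, count_replicate, Ne.symm hab]
      have hcb : count b S = l := by
        simp [hSdef, count_replicate, hab]
      have hTeq : T = replicate (count a T) a + replicate (count b T) b := by
        ext x
        rw [count_add, count_replicate, count_replicate]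
        by_cases hxa : a = x
        · rw [if_pos hxa, if_neg (fun h => Ne.symm hab (h.trans hxa.symm)), add_zero, hxa]
        · by_cases hxb : b = x
          · rw [if_neg hxa, if_pos hxb, zero_add, hxb]
          · rw [if_neg hxa, if_neg hxb]
            have h1 : count x T ≤ count x S := count_le_of_le x hTS
            have h2 : count x S = 0 := by
              rw [hSdef, count_add, count_replicate, count_replicate, if_neg hxa,
                if_neg hxb, add_zero]
            omega
      refine ⟨count a T, count b T, ?_, ?_, ?_, ?_⟩
      · rw [← hca]; exact count_le_of_le a hTS
      · rw [← hcb]; exact count_le_of_le b hTS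
      · have hcard : Multiset.card T = count a T + count b T := by
          conv_lhs => rw [hTeq]
          rw [Multiset.card_add, Multiset.card_replicate, Multiset.card_replicate]
        have : 0 < Multiset.card T := Multiset.card_pos.mpr hT0
        omega
      · rw [← hTsum]
        conv_lhs => rw [hTeq]
        simp [Multiset.sum_replicate]
    · rintro ⟨i, j, hi, hj, hij, rfl⟩
      refine ⟨replicate i a + replicate j b, ?_, ?_, ?_⟩
      · exact add_le_add ((replicate_le_replicate a).mpr hi)
          ((replicate_le_replicate b).mpr hj)
      · intro h0
        have := congrArg Multiset.card h0
        simp at this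
        omega
      · simp [Multiset.sum_replicate]
  -- zero-sum freeness applied to explicit pairs
  have hZ : ∀ i j : ℕ, i ≤ k → j ≤ l → 1 ≤ i + j → i • a + j • b ≠ 0 := by
    intro i j hi hj hij h0
    refine hS (replicate i a + replicate j b) ?_ ?_ ?_
    · exact add_le_add ((replicate_le_replicate a).mpr hi)
        ((replicate_le_replicate b).mpr hj)
    · intro h
      have := congrArg Multiset.card h
      simp at this
      omega
    · simp [Multiset.sum_replicate, h0]
  -- key nonvanishing facts
  have hA : ∀ s : ℕ, 1 ≤ s → s ≤ k + l - 1 → s • a ≠ 0 := by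
    intro s h1 hs2 hs0
    obtain ⟨i, j, hi, hj, hij, hp⟩ :=
      exists_ij k l s (2 * (l / 2)) hk1 (by omega) (by omega) h1 (by omega)
    refine hZ i j hi hj (by omega) ?_
    rw [hb, smul_decomp a d hd2, hij]
    have hje : j % 2 = 0 := by omega
    rw [hje, zero_smul, add_zero, hs0]
  have hB : ∀ s : ℕ, 1 ≤ s → s ≤ k + l - 1 → s • a ≠ d := by
    intro s h1 hs2 hs0
    obtain ⟨i, j, hi, hj, hij, hp⟩ :=
      exists_ij k l s (2 * ((l - 1) / 2) + 1) hk1 (by omega) (by omega) h1 (by omega)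
    refine hZ i j hi hj (by omega) ?_
    rw [hb, smul_decomp a d hd2, hij]
    have hje : j % 2 = 1 := by omega
    rw [hje, one_smul, hs0, ← two_nsmul, hd2]
  set l1 : ℕ := 2 * (l / 2) with hl1def
  set l2 : ℕ := 2 * ((l - 1) / 2) + 1 with hl2def
  have hl1l : l1 ≤ l := by omega
  have hl2l : l2 ≤ l := by omega
  set A1 : Finset G := (Finset.Icc 1 (k + l1)).image (fun m => m • a) with hA1def
  set A2 : Finset G := (Finset.Icc 1 (k + l2)).image (fun m => m • a + d) with hA2def
  -- the subsums set
  have hset : SubSums S = ↑(A1 ∪ A2) := by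
    ext x
    rw [Finset.coe_union, Set.mem_union, hmem]
    constructor
    · rintro ⟨i, j, hi, hj, hij, rfl⟩
      rw [hb, smul_decomp a d hd2]
      rcases Nat.mod_two_eq_zero_or_one j with hj2 | hj2
      · left
        rw [hj2, zero_smul, add_zero]
        simp only [hA1def, Finset.coe_image, Set.mem_image, Finset.mem_coe,
          Finset.mem_Icc]
        exact ⟨i + j, ⟨hij, by omega⟩, rfl⟩
      · right
        rw [hj2, one_smul]
        simp only [hA2def, Finset.coe_image, Set.mem_image, Finset.mem_coe,
          Finset.mem_Icc]
        exact ⟨i + j, ⟨hij, by omega⟩, rfl⟩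
    · rintro (hx | hx)
      · simp only [hA1def, Finset.coe_image, Set.mem_image, Finset.mem_coe,
          Finset.mem_Icc] at hx
        obtain ⟨m, ⟨hm1, hm2⟩, rfl⟩ := hx
        obtain ⟨i, j, hi, hj, hij, hp⟩ :=
          exists_ij k l m l1 hk1 (by omega) hl1l hm1 hm2
        refine ⟨i, j, hi, hj, by omega, ?_⟩
        rw [hb, smul_decomp a d hd2, hij]
        have hje : j % 2 = 0 := by omega
        rw [hje, zero_smul, add_zero]
      · simp only [hA2def, Finset.coe_image, Set.mem_image, Finset.mem_coe,
          Finset.mem_Icc] at hx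
        obtain ⟨m, ⟨hm1, hm2⟩, rfl⟩ := hx
        obtain ⟨i, j, hi, hj, hij, hp⟩ :=
          exists_ij k l m l2 hk1 (by omega) hl2l hm1 hm2
        refine ⟨i, j, hi, hj, by omega, ?_⟩
        rw [hb, smul_decomp a d hd2, hij]
        have hje : j % 2 = 1 := by omega
        rw [hje, one_smul]
  -- cancellation helper
  have hcancel : ∀ m m' : ℕ, 1 ≤ m → m < m' → m' ≤ k + l → m' • a ≠ m • a := by
    intro m m' h1 h2 h3 heq
    have : (m' - m) • a = 0 := by
      rw [sub_nsmul a (le_of_lt h2), heq]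
      abel
    exact hA (m' - m) (by omega) (by omega) this
  have hinj1 : Set.InjOn (fun m : ℕ => m • a) ↑(Finset.Icc 1 (k + l1)) := by
    intro m hm m' hm' h
    simp only [Finset.coe_Icc, Set.mem_Icc] at hm hm'
    by_contra hne
    rcases Nat.lt_or_ge m m' with hlt | hge
    · exact hcancel m m' hm.1 hlt (by omega) h.symm
    · exact hcancel m' m hm'.1 (by omega) (by omega) h
  have hinj2 : Set.InjOn (fun m : ℕ => m • a + d) ↑(Finset.Icc 1 (k + l2)) := by
    intro m hm m' hm' h
    simp only [Finset.coe_Icc, Set.mem_Icc] at hm hm'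
    have h' : m • a = m' • a := by
      have := congrArg (fun x => x - d) h
      simpa using this
    by_contra hne
    rcases Nat.lt_or_ge m m' with hlt | hge
    · exact hcancel m m' hm.1 hlt (by omega) h'.symm
    · exact hcancel m' m hm'.1 (by omega) (by omega) h'
  have hdisj : Disjoint A1 A2 := by
    rw [Finset.disjoint_left]
    rintro x hx1 hx2
    simp only [hA1def, hA2def, Finset.mem_image, Finset.mem_Icc] at hx1 hx2
    obtain ⟨m, ⟨hm1, hm2⟩, rfl⟩ := hx1
    obtain ⟨m', ⟨hm'1, hm'2⟩, heq⟩ := hx2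
    rcases Nat.lt_trichotomy m' m with hlt | heqm | hlt
    · have : (m - m') • a = d := by
        have h3 : (m' • a + d) + -(m' • a) = d := by abel
        rw [sub_nsmul a (le_of_lt hlt), ← heq, h3]
      exact hB (m - m') (by omega) (by omega) this
    · subst heqm
      exact hd0 (add_left_cancel (heq.trans (add_zero _).symm))
    · have : (m' - m) • a = d := by
        have hda : d = -d := by
          rw [eq_neg_iff_add_eq_zero, ← two_nsmul, hd2]
        have h3 : m' • a + -(m' • a + d) = -d := by abel
        rw [sub_nsmul a (le_of_lt hlt), ← heq, h3, ← hda]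
      exact hB (m' - m) (by omega) (by omega) this
  rw [fseq, hset, Set.ncard_coe_finset,
    Finset.card_union_of_disjoint hdisj, hA1def, hA2def,
    Finset.card_image_of_injOn hinj1, Finset.card_image_of_injOn hinj2,
    Nat.card_Icc, Nat.card_Icc]
  omega
end

section
/- Let k ≥ l ≥ 2 be integers and let a, b be two distinct elements of a finite abelian group G such that a^k b^l is zero-sum free. Then it cannot simultaneously hold that a^k b^l is smooth and 2a = 2b; that is, if 2a = 2b then a^k b^l is not smooth. -/
open Multiset

/-- Remark after Lemma 2.5: for `k ≥ l ≥ 2`, `a ≠ b` and `aᵏbˡ` zero-sum free,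
the conditions that `aᵏbˡ` is smooth and `2a = 2b` cannot hold simultaneously. -/
theorem stmt5 {G : Type*} [AddCommGroup G] [Fintype G] (k l : ℕ)
    (hl : 2 ≤ l) (hkl : l ≤ k) (a b : G) (hab : a ≠ b)
    (hS : ZeroSumFree (replicate k a + replicate l b))
    (h2 : 2 • a = 2 • b) :
    ¬ IsSmooth (replicate k a + replicate l b) := by
  classical
  rintro ⟨g, ns, hsort, hhead, hSeq, hlt, -⟩
  obtain ⟨t, rfl⟩ : ∃ t, ns = 1 :: t := by
    cases ns with
    | nil => simp at hhead
    | cons x t =>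
      simp only [List.head?_cons, Option.some.injEq] at hhead
      exact ⟨t, by rw [hhead]⟩
  have hpos : ∀ x ∈ (1 :: t : List ℕ), 1 ≤ x := by
    intro x hx
    rcases List.mem_cons.1 hx with rfl | hx
    · exact le_refl 1
    · exact (List.pairwise_cons.1 hsort).1 x hx
  have hgS : g ∈ replicate k a + replicate l b := by
    rw [hSeq]
    simp only [Multiset.mem_coe, List.mem_map]
    exact ⟨1, List.mem_cons_self, one_nsmul g⟩
  have hg : g = a ∨ g = b := by
    rcases Multiset.mem_add.1 hgS with h | h
    · exact Or.inl (Multiset.eq_of_mem_replicate h)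
    · exact Or.inr (Multiset.eq_of_mem_replicate h)
  have key : ∀ c : G, 2 • c = 2 • g →
      2 ≤ Multiset.count c (replicate k a + replicate l b) → c = g := by
    intro c h2c hcount
    rw [hSeq, ← Multiset.map_coe, Multiset.count_map] at hcount
    set M : Multiset ℕ := (↑(1 :: t) : Multiset ℕ) with hM
    set F : Multiset ℕ := Multiset.filter (fun n => c = n • g) M with hF
    obtain ⟨m₁, hm₁⟩ : ∃ m₁, m₁ ∈ F := Multiset.card_pos_iff_exists_mem.1 (by omega)
    obtain ⟨F', hF'⟩ := Multiset.exists_cons_of_mem hm₁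
    have hcard' : 0 < Multiset.card F' := by
      have := congrArg Multiset.card hF'
      simp only [Multiset.card_cons] at this
      omega
    obtain ⟨m₂, hm₂⟩ : ∃ m₂, m₂ ∈ F' := Multiset.card_pos_iff_exists_mem.1 hcard'
    obtain ⟨F'', hF''⟩ := Multiset.exists_cons_of_mem hm₂
    have hm₂F : m₂ ∈ F := by rw [hF']; exact Multiset.mem_cons_of_mem hm₂
    have hm₁' : m₁ ∈ M ∧ c = m₁ • g := by
      rw [hF] at hm₁; exact Multiset.mem_filter.1 hm₁
    have hm₂' : m₂ ∈ M ∧ c = m₂ • g := by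
      rw [hF] at hm₂F; exact Multiset.mem_filter.1 hm₂F
    have hc₁ := hm₁'.2
    have hc₂ := hm₂'.2
    have h₁1 : 1 ≤ m₁ := hpos _ (by simpa [hM] using hm₁'.1)
    have h₂1 : 1 ≤ m₂ := hpos _ (by simpa [hM] using hm₂'.1)
    -- sum bound
    have hFM : F ≤ M := Multiset.filter_le _ _
    obtain ⟨R, hR⟩ := Multiset.le_iff_exists_add.1 hFM
    have hsumM : M.sum = (1 :: t : List ℕ).sum := by simp [hM]
    have hsum : m₁ + m₂ ≤ (1 :: t : List ℕ).sum := by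
      have h1 : M.sum = F.sum + R.sum := by rw [hR, Multiset.sum_add]
      have h2 : F.sum = m₁ + m₂ + F''.sum := by
        rw [hF', hF'', Multiset.sum_cons, Multiset.sum_cons]; ring
      omega
    -- (m₁+m₂)•g = 2•g
    have hsm : (m₁ + m₂) • g = 2 • g := by
      rw [add_nsmul, ← hc₁, ← hc₂, ← two_nsmul, h2c]
    have hdec : m₁ + m₂ = (m₁ + m₂ - 2) + 2 := by omega
    have hz : (m₁ + m₂ - 2) • g = 0 := by
      have : (m₁ + m₂ - 2) • g + 2 • g = 0 + 2 • g := by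
        rw [← add_nsmul, ← hdec, hsm, zero_add]
      exact add_right_cancel this
    have hdvd := addOrderOf_dvd_of_nsmul_eq_zero hz
    have hsmall : m₁ + m₂ - 2 < addOrderOf g := by omega
    have h0 : m₁ + m₂ - 2 = 0 := Nat.eq_zero_of_dvd_of_lt hdvd hsmall
    have : m₁ = 1 := by omega
    rw [hc₁, this, one_nsmul]
  rcases hg with h | h
  · -- g = a, take c = b
    have hb : b = g := by
      apply key b (by rw [h]; exact h2.symm)
      rw [Multiset.count_add, Multiset.count_replicate, Multiset.count_replicate,
        if_neg hab, if_pos rfl]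
      omega
    exact hab (h.symm.trans hb.symm)
  · -- g = b, take c = a
    have ha : a = g := by
      apply key a (by rw [h]; exact h2)
      rw [Multiset.count_add, Multiset.count_replicate, Multiset.count_replicate,
        if_pos rfl, if_neg (fun h' => hab h'.symm)]
      omega
    exact hab (ha.trans h)
end

section
/- Let G be a finite abelian group, S₁ a sequence over G, and a, g ∈ G such that S = S₁a is zero-sum free, S₁ is g-smooth, and S is not g-smooth. Then f(S) = 2·f(S₁) + 1. -/
open Multiset

/-- Any submultiset of `a ::ₘ S` either avoids `a` or contains it. -/
lemma le_cons_cases {G : Type*} {T S : Multiset G} {a : G} (h : T ≤ a ::ₘ S) :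
    T ≤ S ∨ ∃ T', T' ≤ S ∧ T = a ::ₘ T' := by
  classical
  by_cases ha : a ∈ T
  · right
    refine ⟨T.erase a, ?_, (Multiset.cons_erase ha).symm⟩
    have := Multiset.erase_le_erase a h
    simpa using this
  · left
    exact (Multiset.le_cons_of_notMem ha).1 h

/-- Lemma 2.7: if `S = S₁a` is zero-sum free, `S₁` is `g`-smooth and `S` is not
`g`-smooth, then `f(S) = 2f(S₁) + 1`. -/
theorem stmt6 {G : Type*} [AddCommGroup G] [Fintype G] (S₁ : Multiset G)
    (a g : G) (hS : ZeroSumFree (S₁ + {a}))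
    (h1 : IsSmoothAt g S₁) (h2 : ¬ IsSmoothAt g (S₁ + {a})) :
    fseq (S₁ + {a}) = 2 * fseq S₁ + 1 := by
  classical
  obtain ⟨ns, hsort, hhead, hSeq, hlt, hSig⟩ := h1
  set n := ns.sum with hn
  have hScons : S₁ + {a} = a ::ₘ S₁ := by
    rw [add_comm, Multiset.singleton_add]
  -- `ns` begins with `1`
  obtain ⟨t, rfl⟩ : ∃ t, ns = 1 :: t := by
    cases ns with
    | nil => simp at hhead
    | cons b t =>
      simp only [List.head?_cons, Option.some.injEq] at hhead
      exact ⟨t, by rw [hhead]⟩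
  have hn1 : 1 ≤ n := by
    rw [hn]; simp [List.sum_cons]
  -- members of Σ(S₁)
  have hmem : ∀ m : ℕ, 1 ≤ m → m ≤ n → m • g ∈ SubSums S₁ := by
    intro m h1m hmn
    rw [hSig]; exact ⟨m, h1m, hmn, rfl⟩
  -- basic: T₁ ≤ S₁ is a submultiset of S
  have hsub : ∀ T : Multiset G, T ≤ S₁ → T ≤ S₁ + {a} :=
    fun T hT => hT.trans (Multiset.le_add_right _ _)
  -- a + d•g ≠ 0 for 0 ≤ d ≤ n
  have hzero : ∀ d : ℕ, d ≤ n → a + d • g ≠ 0 := by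
    intro d hd heq
    rcases Nat.eq_zero_or_pos d with rfl | hdpos
    · simp only [zero_smul, add_zero] at heq
      exact hS {a} (Multiset.le_add_left _ _) (by simp) (by simp [heq])
    · obtain ⟨T₁, hT₁le, hT₁ne, hT₁sum⟩ := hmem d hdpos hd
      refine hS (a ::ₘ T₁) ?_ (by simp) ?_
      · rw [hScons]; exact Multiset.cons_le_cons a hT₁le
      · rw [Multiset.sum_cons, hT₁sum, heq]
  -- injectivity of m ↦ m • g below the order
  have hinj : ∀ i j : ℕ, i < addOrderOf g → j < addOrderOf g → i • g = j • g → i = j :=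
    fun i j hi hj hij => nsmul_injOn_Iio_addOrderOf hi hj hij
  -- a is not of the form k • g for 1 ≤ k ≤ n
  have hak : ∀ k : ℕ, 1 ≤ k → k ≤ n → a ≠ k • g := by
    intro k h1k hkn hka
    -- first, n + k < addOrderOf g
    have hnk : n + k < addOrderOf g := by
      by_contra hge
      push_neg at hge
      set i' := addOrderOf g - k with hi'
      have hkord : k < addOrderOf g := lt_of_le_of_lt hkn hlt
      have h1i' : 1 ≤ i' := by omega
      have hi'n : i' ≤ n := by omega
      have : a + i' • g = 0 := by
        rw [hka, ← add_nsmul]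
        have : k + i' = addOrderOf g := by omega
        rw [this, addOrderOf_nsmul_eq_zero]
      exact hzero i' hi'n this
    -- S is g-smooth, contradiction
    apply h2
    set ns' := List.orderedInsert (· ≤ ·) k (1 :: t) with hns'
    have hperm : ns'.Perm (k :: 1 :: t) := List.perm_orderedInsert _ _ _
    have hsum' : ns'.sum = n + k := by
      rw [hperm.sum_eq]; simp [hn, List.sum_cons]; ring
    refine ⟨ns', hsort.orderedInsert _ _, ?_, ?_, by rw [hsum']; exact hnk, ?_⟩
    · -- head is 1
      rw [hns']
      by_cases hk1 : k ≤ 1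
      · interval_cases k
        simp [List.orderedInsert]
      · simp [List.orderedInsert, hk1]
    · -- multiset equality
      have : (↑(ns'.map (fun n => n • g)) : Multiset G)
          = ↑((k :: 1 :: t).map (fun n => n • g)) :=
        Multiset.coe_eq_coe.2 ((hperm.map _))
      rw [this, hScons, hSeq]
      simp [hka]
    · -- SubSums equality
      rw [hsum']
      ext x
      constructor
      · rintro ⟨T, hTle, hTne, rfl⟩
        rw [hScons] at hTle
        rcases le_cons_cases hTle with hT | ⟨T', hT'le, rfl⟩
        · have : T.sum ∈ SubSums S₁ := ⟨T, hT, hTne, rfl⟩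
          rw [hSig] at this
          obtain ⟨m, h1m, hmn, hx⟩ := this
          exact ⟨m, h1m, hmn.trans (by omega), hx⟩
        · rcases eq_or_ne T' 0 with rfl | hT'ne
          · exact ⟨k, h1k, by omega, by simp [hka]⟩
          · have : T'.sum ∈ SubSums S₁ := ⟨T', hT'le, hT'ne, rfl⟩
            rw [hSig] at this
            obtain ⟨m, h1m, hmn, hx⟩ := this
            refine ⟨m + k, by omega, by omega, ?_⟩
            rw [Multiset.sum_cons, hx, hka, ← add_nsmul]
            congr 1
            omega
      · rintro ⟨m, h1m, hmnk, rfl⟩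
        by_cases hmn : m ≤ n
        · obtain ⟨T₁, hT₁le, hT₁ne, hT₁sum⟩ := hmem m h1m hmn
          exact ⟨T₁, hsub T₁ hT₁le, hT₁ne, hT₁sum⟩
        · push_neg at hmn
          have h1mk : 1 ≤ m - k := by omega
          have hmkn : m - k ≤ n := by omega
          obtain ⟨T₁, hT₁le, hT₁ne, hT₁sum⟩ := hmem (m - k) h1mk hmkn
          refine ⟨a ::ₘ T₁, ?_, by simp, ?_⟩
          · rw [hScons]; exact Multiset.cons_le_cons a hT₁le
          · rw [Multiset.sum_cons, hT₁sum, hka, ← add_nsmul]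
            congr 1
            omega
  -- decomposition of Σ(S)
  have hdecomp : SubSums (S₁ + {a})
      = SubSums S₁ ∪ ((a + ·) '' (insert 0 (SubSums S₁))) := by
    ext x
    constructor
    · rintro ⟨T, hTle, hTne, rfl⟩
      rw [hScons] at hTle
      rcases le_cons_cases hTle with hT | ⟨T', hT'le, rfl⟩
      · exact Or.inl ⟨T, hT, hTne, rfl⟩
      · rcases eq_or_ne T' 0 with rfl | hT'ne
        · exact Or.inr ⟨0, Set.mem_insert _ _, by simp⟩
        · exact Or.inr ⟨T'.sum, Set.mem_insert_of_mem _ ⟨T', hT'le, hT'ne, rfl⟩,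
            by simp [Multiset.sum_cons]⟩
    · rintro (⟨T, hT, hTne, rfl⟩ | ⟨y, hy, rfl⟩)
      · exact ⟨T, hsub T hT, hTne, rfl⟩
      · rcases Set.mem_insert_iff.1 hy with rfl | hy'
        · exact ⟨{a}, Multiset.le_add_left _ _, by simp, by simp⟩
        · obtain ⟨T₁, hT₁le, hT₁ne, hT₁sum⟩ := hy'
          refine ⟨a ::ₘ T₁, ?_, by simp, by rw [Multiset.sum_cons, hT₁sum]⟩
          rw [hScons]; exact Multiset.cons_le_cons a hT₁le
  -- Σ(S₁) as an image
  have hA : SubSums S₁ = (fun m : ℕ => m • g) '' (Set.Icc 1 n) := by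
    rw [hSig]
    ext x
    simp only [Set.mem_image, Set.mem_Icc, Set.mem_setOf_eq]
    constructor
    · rintro ⟨m, h1m, hmn, rfl⟩; exact ⟨m, ⟨h1m, hmn⟩, rfl⟩
    · rintro ⟨m, ⟨h1m, hmn⟩, rfl⟩; exact ⟨m, h1m, hmn, rfl⟩
  have hcardA : (SubSums S₁).ncard = n := by
    rw [hA, Set.ncard_image_of_injOn
      (nsmul_injOn_Iio_addOrderOf.mono (fun m hm => lt_of_le_of_lt hm.2 hlt))]
    rw [← Finset.coe_Icc, Set.ncard_coe_finset, Nat.card_Icc]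
    omega
  -- 0 ∉ Σ(S₁)
  have h0 : (0 : G) ∉ SubSums S₁ := by
    rintro ⟨T, hT, hTne, hTsum⟩
    exact hS T (hsub T hT) hTne hTsum
  -- disjointness
  have hdisj : Disjoint (SubSums S₁) ((a + ·) '' (insert 0 (SubSums S₁))) := by
    rw [Set.disjoint_left]
    rintro x hx ⟨y, hy, rfl⟩
    rw [hSig] at hx
    obtain ⟨j, h1j, hjn, hxj⟩ := hx
    rcases Set.mem_insert_iff.1 hy with rfl | hy'
    · simp only [add_zero] at hxj
      exact hak j h1j hjn hxj
    · rw [hSig] at hy'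
      obtain ⟨i, h1i, hin, rfl⟩ := hy'
      rcases le_or_gt j i with hji | hij
      · -- a + (i - j) • g = 0
        have key : a + (i - j) • g = 0 := by
          have hxj' : a + i • g = j • g := hxj
          have : a = j • g - i • g := eq_sub_of_add_eq hxj'
          rw [this]
          have : j • g + (i - j) • g = i • g := by
            rw [← add_nsmul]; congr 1; omega
          rw [sub_add_eq_add_sub, this, sub_self]
        exact hzero (i - j) (by omega) key
      · -- a = (j - i) • g
        have key : a = (j - i) • g := by
          have hji' : ((j - i) + i) • g = j • g := by congr 1; omega
          rw [add_nsmul] at hji'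
          have := hxj
          rw [← hji'] at this
          exact add_right_cancel this
        exact hak (j - i) (by omega) (by omega) key
  -- cardinality of the shifted part
  have hfin1 : (SubSums S₁).Finite := Set.toFinite _
  have hcardB : ((a + ·) '' (insert 0 (SubSums S₁))).ncard = n + 1 := by
    rw [Set.ncard_image_of_injective _ (add_right_injective a),
      Set.ncard_insert_of_notMem h0 hfin1, hcardA]
  -- conclusion
  have : fseq (S₁ + {a}) = n + (n + 1) := by
    rw [fseq, hdecomp, Set.ncard_union_eq hdisj (Set.toFinite _) (Set.toFinite _),
      hcardA, hcardB]
  rw [this, fseq, hcardA]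
  omega
end

section
/- Let G be a finite abelian group and let S = S₁·g be a zero-sum free sequence over G, where g ∈ G is an element of order 2 and S₁ is a nonempty sequence. Then f(S) ≥ f(S₁) + 2. -/
open Multiset

/-- If `S = S₁·g` is zero-sum free with `g` of order `2` and `S₁` nonempty, then
`f(S) ≥ f(S₁) + 2`. -/
theorem stmt13 {G : Type*} [AddCommGroup G] [Fintype G] (S₁ : Multiset G)
    (hS₁ : S₁ ≠ 0) (g : G) (hg : addOrderOf g = 2)
    (hS : ZeroSumFree (S₁ + {g})) :
    fseq S₁ + 2 ≤ fseq (S₁ + {g}) := by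
  classical
  set s := S₁.sum with hs
  have hgg : g + g = 0 := by
    have := addOrderOf_nsmul_eq_zero g
    rw [hg, two_nsmul] at this
    exact this
  have hsne : s ≠ 0 := hS S₁ (Multiset.le_add_right _ _) hS₁
  -- g ∉ Σ(S₁)
  have h1 : g ∉ SubSums S₁ := by
    rintro ⟨T, hT, hTne, hTsum⟩
    refine hS (T + {g}) (add_le_add_left hT _) (by simp) ?_
    simp [hTsum, hgg]
  -- g + s ∉ Σ(S₁)
  have h2 : g + s ∉ SubSums S₁ := by
    rintro ⟨T, hT, hTne, hTsum⟩
    refine hS (S₁ - T + {g}) (add_le_add_left (Multiset.sub_le_self _ _) _) (by simp) ?_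
    have hsum : T.sum + (S₁ - T).sum = s := by
      rw [← Multiset.sum_add, add_tsub_cancel_of_le hT]
    have key : (S₁ - T).sum + g = 0 := by
      have h := hsum
      rw [hTsum] at h
      have h4 : (S₁ - T).sum + g = (g + s + (S₁ - T).sum) - s := by abel
      rw [h4, h, sub_self]
    rw [Multiset.sum_add, Multiset.sum_singleton, key]
  have hne : g ≠ g + s := by
    intro h
    exact hsne (by simpa using h.symm)
  -- memberships in Σ(S)
  have hgmem : g ∈ SubSums (S₁ + {g}) :=
    ⟨{g}, Multiset.le_add_left _ _, by simp, by simp⟩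
  have hgsmem : g + s ∈ SubSums (S₁ + {g}) :=
    ⟨S₁ + {g}, le_refl _, by simp [hS₁], by simp [add_comm, hs]⟩
  have hsub : insert g (insert (g + s) (SubSums S₁)) ⊆ SubSums (S₁ + {g}) := by
    rintro x hx
    rcases hx with rfl | hx
    · exact hgmem
    rcases hx with rfl | hx
    · exact hgsmem
    · obtain ⟨T, hT, hTne, hTsum⟩ := hx
      exact ⟨T, hT.trans (Multiset.le_add_right _ _), hTne, hTsum⟩
  have hfin : (SubSums (S₁ + {g})).Finite := Set.toFinite _
  have hcard : (insert g (insert (g + s) (SubSums S₁))).ncard = fseq S₁ + 2 := by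
    rw [Set.ncard_insert_of_notMem (by simp [hne, h1]) (Set.toFinite _),
      Set.ncard_insert_of_notMem h2 (Set.toFinite _)]
    rfl
  calc fseq S₁ + 2 = (insert g (insert (g + s) (SubSums S₁))).ncard := hcard.symm
    _ ≤ fseq (S₁ + {g}) := Set.ncard_le_ncard hsub hfin
end

section
/- Let k, l ≥ 1 be integers and let a, b be two distinct elements of a finite abelian group G such that a^k b^l is zero-sum free and nb ≠ sa for all integers n, s with 1 ≤ n ≤ l and 1 ≤ s ≤ k. Then f(a^k b^l) = kl + k + l. -/
open Multiset

/-- If `k, l ≥ 1`, `a ≠ b`, `aᵏbˡ` is zero-sum free and `nb ≠ sa` for all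
`1 ≤ n ≤ l`, `1 ≤ s ≤ k`, then `f(aᵏbˡ) = kl + k + l`. -/
theorem stmt15 {G : Type*} [AddCommGroup G] [Fintype G] (k l : ℕ)
    (hk : 1 ≤ k) (hl : 1 ≤ l) (a b : G) (hab : a ≠ b)
    (hS : ZeroSumFree (replicate k a + replicate l b))
    (h : ∀ n s : ℕ, 1 ≤ n → n ≤ l → 1 ≤ s → s ≤ k → n • b ≠ s • a) :
    fseq (replicate k a + replicate l b) = k * l + k + l := by
  classical
  set S : Multiset G := replicate k a + replicate l b with hSdef
  -- zero-sum-free in (p,q) form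
  have hz : ∀ p q : ℕ, p ≤ k → q ≤ l → p • a + q • b = 0 → p = 0 ∧ q = 0 := by
    intro p q hp hq hsum
    by_contra hpq
    refine hS (replicate p a + replicate q b) ?_ ?_ ?_
    · exact add_le_add ((replicate_le_replicate a).2 hp) ((replicate_le_replicate b).2 hq)
    · intro h0
      apply hpq
      have h1 := congrArg (count a) h0
      have h2 := congrArg (count b) h0
      simp [count_replicate, hab, Ne.symm hab] at h1 h2
      exact ⟨h1, h2⟩
    · simpa using hsum
  -- injectivity
  have aux : ∀ i j i' j' : ℕ, i' ≤ i → i ≤ k → j ≤ l → i' ≤ k → j' ≤ l →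
      i • a + j • b = i' • a + j' • b → i = i' ∧ j = j' := by
    intro i j i' j' hii hik hjl hik' hjl' heq
    obtain ⟨d, rfl⟩ := Nat.exists_eq_add_of_le hii
    have hd : d ≤ k := by omega
    have heq2 : d • a + j • b = j' • b := by
      have h0 : i' • a + (d • a + j • b) = i' • a + j' • b := by
        calc i' • a + (d • a + j • b) = (i' + d) • a + j • b := by rw [add_smul]; abel
          _ = i' • a + j' • b := heq
      exact add_left_cancel h0
    rcases le_or_gt j j' with hjj | hjj
    · obtain ⟨e, rfl⟩ := Nat.exists_eq_add_of_le hjj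
      have he : e ≤ l := by omega
      have heq3 : d • a = e • b := by
        have h0 : d • a + j • b = e • b + j • b := by
          calc d • a + j • b = (j + e) • b := heq2
            _ = e • b + j • b := by rw [add_smul]; abel
        exact add_right_cancel h0
      rcases Nat.eq_zero_or_pos d with rfl | hd1
      · rcases Nat.eq_zero_or_pos e with rfl | he1
        · omega
        · exact absurd ((hz 0 e (by omega) he (by simpa using heq3.symm)).2) (by omega)
      · rcases Nat.eq_zero_or_pos e with rfl | he1
        · exact absurd ((hz d 0 hd (by omega) (by simpa using heq3)).1) (by omega)
        · exact absurd heq3.symm (h e d he1 he hd1 hd)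
    · obtain ⟨e, rfl⟩ : ∃ e, j = j' + e := Nat.exists_eq_add_of_le hjj.le
      have he1 : 1 ≤ e := by omega
      have he : e ≤ l := by omega
      have heq3 : d • a + e • b = 0 := by
        have h0 : j' • b + (d • a + e • b) = j' • b + 0 := by
          calc j' • b + (d • a + e • b) = d • a + (j' + e) • b := by rw [add_smul]; abel
            _ = j' • b := heq2
            _ = j' • b + 0 := (add_zero _).symm
        exact add_left_cancel h0
      have := hz d e hd he heq3
      omega
  have key : ∀ i j i' j' : ℕ, i ≤ k → j ≤ l → i' ≤ k → j' ≤ l →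
      i • a + j • b = i' • a + j' • b → i = i' ∧ j = j' := by
    intro i j i' j' hik hjl hik' hjl' heq
    rcases le_total i' i with hii | hii
    · exact aux i j i' j' hii hik hjl hik' hjl' heq
    · have := aux i' j' i j hii hik' hjl' hik hjl heq.symm
      omega
  -- describe SubSums as a finset image
  set F : Finset (ℕ × ℕ) := (Finset.range (k+1) ×ˢ Finset.range (l+1)).erase (0,0) with hF
  have hsub : SubSums S = ↑(F.image (fun p : ℕ × ℕ => p.1 • a + p.2 • b)) := by
    ext x
    simp only [Finset.coe_image, Set.mem_image, Finset.mem_coe, hF, Finset.mem_erase,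
      Finset.mem_product, Finset.mem_range, SubSums, Set.mem_setOf_eq]
    constructor
    · rintro ⟨T, hTS, hT0, rfl⟩
      have hca : T.count a ≤ k := by
        have := count_le_of_le a hTS
        rwa [hSdef, count_add, count_replicate, count_replicate, if_pos rfl,
          if_neg (Ne.symm hab), add_zero] at this
      have hcb : T.count b ≤ l := by
        have := count_le_of_le b hTS
        rwa [hSdef, count_add, count_replicate, count_replicate, if_neg hab,
          if_pos rfl, zero_add] at this
      have hTeq : T = replicate (T.count a) a + replicate (T.count b) b := by
        ext x
        rw [count_add, count_replicate, count_replicate]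
        by_cases hxa : x = a
        · rw [if_pos hxa.symm, if_neg (show b ≠ x from fun hbx => hab (hbx.trans hxa).symm),
            add_zero, hxa]
        · by_cases hxb : x = b
          · rw [if_neg (show a ≠ x from fun hax => hxa hax.symm), if_pos hxb.symm,
              zero_add, hxb]
          · rw [if_neg (show a ≠ x from fun hax => hxa hax.symm),
              if_neg (show b ≠ x from fun hbx => hxb hbx.symm), add_zero]
            have := count_le_of_le x hTS
            rw [hSdef, count_add, count_replicate, count_replicate,
              if_neg (show a ≠ x from fun hax => hxa hax.symm),
              if_neg (show b ≠ x from fun hbx => hxb hbx.symm), add_zero] at this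
            omega
      refine ⟨(T.count a, T.count b), ⟨?_, by omega, by omega⟩, ?_⟩
      · intro h0
        apply hT0
        have h1 : T.count a = 0 := congrArg Prod.fst h0
        have h2 : T.count b = 0 := congrArg Prod.snd h0
        rw [hTeq, h1, h2]
        simp
      · show T.count a • a + T.count b • b = T.sum
        conv_rhs => rw [hTeq]
        rw [Multiset.sum_add, Multiset.sum_replicate, Multiset.sum_replicate]
    · rintro ⟨⟨i, j⟩, ⟨hne, hik, hjl⟩, rfl⟩
      refine ⟨replicate i a + replicate j b, ?_, ?_, ?_⟩
      · exact add_le_add ((replicate_le_replicate a).2 (by omega))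
          ((replicate_le_replicate b).2 (by omega))
      · intro h0
        apply hne
        have h1 := congrArg (count a) h0
        have h2 := congrArg (count b) h0
        simp [count_replicate, hab, Ne.symm hab] at h1 h2
        simp [h1, h2, Prod.ext_iff]
      · rw [Multiset.sum_add, Multiset.sum_replicate, Multiset.sum_replicate]
  rw [fseq, hsub, Set.ncard_coe_finset]
  rw [Finset.card_image_of_injOn]
  · rw [hF, Finset.card_erase_of_mem (by simp)]
    simp only [Finset.card_product, Finset.card_range]
    have : (k+1)*(l+1) = k*l+k+l+1 := by ring
    omega
  · rintro ⟨i, j⟩ hij ⟨i', j'⟩ hij' heq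
    simp only [hF, Finset.mem_coe, Finset.mem_erase, Finset.mem_product, Finset.mem_range] at hij hij'
    have := key i j i' j' (by omega) (by omega) (by omega) (by omega) heq
    rw [Prod.ext_iff]
    exact ⟨this.1, this.2⟩
end

section
/- Let G be a finite abelian group and let S be a zero-sum free sequence over G that contains an element of order 2. Then f(S) ≥ 2|S| − 1. -/
open Multiset

/-- Lemma 2.4: if a zero-sum free sequence `S` contains an element of order `2`,
then `f(S) ≥ 2|S| - 1`. -/
theorem stmt16 {G : Type*} [AddCommGroup G] [Fintype G] (S : Multiset G)
    (hS : ZeroSumFree S) (hg : ∃ g ∈ S, addOrderOf g = 2) :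
    2 * (S.card : ℤ) - 1 ≤ (fseq S : ℤ) := by
  classical
  obtain ⟨g, hgS, hord⟩ := hg
  have hg2 : g + g = 0 := by
    have h := addOrderOf_nsmul_eq_zero g
    rw [hord, two_nsmul] at h
    exact h
  have hg0 : g ≠ 0 := by
    intro h
    rw [h, addOrderOf_zero] at hord
    norm_num at hord
  have hneg : -g = g := neg_eq_of_add_eq_zero_left hg2
  set S' := S.erase g with hS'def
  have hcons : S = g ::ₘ S' := (Multiset.cons_erase hgS).symm
  set L := S'.toList with hLdef
  have hL : (L : Multiset G) = S' := Multiset.coe_toList S'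
  set k := L.length with hkdef
  have hcard : S.card = k + 1 := by
    rw [hcons, Multiset.card_cons, ← hL, Multiset.coe_card]
  -- partial sums
  set P : ℕ → G := fun i => (L.take (i + 1)).sum with hPdef
  have htake_le : ∀ i : ℕ, (↑(L.take (i + 1)) : Multiset G) ≤ S := by
    intro i
    calc (↑(L.take (i + 1)) : Multiset G) ≤ ↑L :=
          Multiset.coe_le.mpr (L.take_sublist (i+1)).subperm
      _ = S' := hL
      _ ≤ S := by rw [hcons]; exact Multiset.le_cons_self _ _
  have htake_ne : ∀ i : ℕ, i < k → (↑(L.take (i + 1)) : Multiset G) ≠ 0 := by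
    intro i hi
    rw [← Multiset.card_pos, Multiset.coe_card, List.length_take]
    omega
  have hconsle : ∀ D : Multiset G, D ≤ (↑L : Multiset G) → g ::ₘ D ≤ S := by
    intro D hD
    rw [hcons]
    exact Multiset.cons_le_cons g (hL ▸ hD)
  -- difference multiset
  have hdiff : ∀ i j : ℕ, i < j → j < k →
      ∃ D : Multiset G, D ≤ (↑L : Multiset G) ∧ D ≠ 0 ∧ D.sum = P j - P i := by
    intro i j hij hjk
    have hle : (↑(L.take (i + 1)) : Multiset G) ≤ ↑(L.take (j + 1)) := by
      refine Multiset.coe_le.mpr ?_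
      exact (List.IsPrefix.sublist (List.take_isPrefix_take.mpr (Or.inl (by omega)))).subperm
    refine ⟨↑(L.take (j + 1)) - ↑(L.take (i + 1)), ?_, ?_, ?_⟩
    · exact le_trans (Multiset.sub_le_self _ _)
        (Multiset.coe_le.mpr (L.take_sublist (j+1)).subperm)
    · rw [← Multiset.card_pos, Multiset.card_sub hle]
      simp only [Multiset.coe_card, List.length_take]
      omega
    · have h := tsub_add_cancel_of_le hle
      have h2 := congrArg Multiset.sum h
      rw [Multiset.sum_add] at h2
      simp only [Multiset.sum_coe] at *
      exact eq_sub_of_add_eq h2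
  -- distinctness lemmas
  have h1 : ∀ i j : ℕ, i < j → j < k → P i ≠ P j := by
    intro i j hij hjk heq
    obtain ⟨D, hD1, hD2, hD3⟩ := hdiff i j hij hjk
    exact hS D (le_trans hD1 (by rw [hL, hcons]; exact Multiset.le_cons_self _ _)) hD2
      (by rw [hD3, ← heq, sub_self])
  have h2 : ∀ i j : ℕ, i < j → j < k → P j - P i ≠ g := by
    intro i j hij hjk heq
    obtain ⟨D, hD1, hD2, hD3⟩ := hdiff i j hij hjk
    refine hS (g ::ₘ D) (hconsle D hD1) (Multiset.cons_ne_zero) ?_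
    rw [Multiset.sum_cons, hD3, heq, hg2]
  have h3 : ∀ i : ℕ, i < k → P i ≠ 0 := by
    intro i hi
    exact hS _ (htake_le i) (htake_ne i hi)
  have h4 : ∀ i : ℕ, i < k → P i ≠ g := by
    intro i hi heq
    refine hS (g ::ₘ ↑(L.take (i + 1))) ?_ (Multiset.cons_ne_zero) ?_
    · exact hconsle _ (Multiset.coe_le.mpr (L.take_sublist (i+1)).subperm)
    · rw [Multiset.sum_cons]
      show g + P i = 0
      rw [heq, hg2]
  -- the injection
  set F : Fin k × Bool → G := fun p => P p.1 + (if p.2 then g else 0) with hFdef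
  have hFinj : Function.Injective F := by
    rintro ⟨i, b⟩ ⟨j, c⟩ heq
    simp only [hFdef] at heq
    have hik : (i : ℕ) < k := i.2
    have hjk : (j : ℕ) < k := j.2
    rcases lt_trichotomy (i : ℕ) (j : ℕ) with hij | hij | hij
    · exfalso
      cases b <;> cases c <;> simp only [Bool.false_eq_true, if_true, if_false, add_zero] at heq
      · exact h1 i j hij hjk heq
      · exact h2 i j hij hjk (by rw [heq, sub_add_cancel_left]; exact hneg)
      · exact h2 i j hij hjk (by rw [← heq, add_sub_cancel_left])
      · exact h1 i j hij hjk (add_right_cancel heq)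
    · have : i = j := Fin.ext hij
      subst this
      cases b <;> cases c <;>
        simp only [Bool.false_eq_true, if_true, if_false, add_zero] at heq ⊢
      · exact absurd (left_eq_add.mp heq) hg0
      · exact absurd (add_eq_left.mp heq) hg0
    · exfalso
      cases b <;> cases c <;> simp only [Bool.false_eq_true, if_true, if_false, add_zero] at heq
      · exact h1 j i hij hik heq.symm
      · exact h2 j i hij hik (by rw [heq, add_sub_cancel_left])
      · exact h2 j i hij hik (by rw [← heq, sub_add_cancel_left]; exact hneg)
      · exact h1 j i hij hik (add_right_cancel heq.symm)
  -- membership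
  have hmem : ∀ p : Fin k × Bool, F p ∈ SubSums S := by
    rintro ⟨i, b⟩
    cases b
    · refine ⟨↑(L.take ((i:ℕ) + 1)), htake_le i, htake_ne i i.2, ?_⟩
      simp only [hFdef, Bool.false_eq_true, if_false, add_zero, Multiset.sum_coe]
      rfl
    · refine ⟨g ::ₘ ↑(L.take ((i:ℕ) + 1)),
        hconsle _ (Multiset.coe_le.mpr (L.take_sublist _).subperm),
        Multiset.cons_ne_zero, ?_⟩
      simp only [hFdef, if_true, Multiset.sum_cons, Multiset.sum_coe]
      exact add_comm _ _
  have hgmem : g ∈ SubSums S :=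
    ⟨{g}, Multiset.singleton_le.mpr hgS, by simp, Multiset.sum_singleton g⟩
  have hgnot : g ∉ Finset.image F Finset.univ := by
    intro hmem'
    obtain ⟨⟨i, b⟩, -, heq⟩ := Finset.mem_image.mp hmem'
    cases b <;>
      simp only [hFdef, Bool.false_eq_true, if_true, if_false, add_zero] at heq
    · exact h4 i i.2 heq
    · exact h3 i i.2 (by have := heq.trans (zero_add g).symm; exact add_right_cancel this)
  set T : Finset G := insert g (Finset.image F Finset.univ) with hTdef
  have hTcard : T.card = 2 * k + 1 := by
    rw [hTdef, Finset.card_insert_of_notMem hgnot,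
      Finset.card_image_of_injective _ hFinj, Finset.card_univ]
    simp [Fintype.card_prod]
    ring
  have hsub : (↑T : Set G) ⊆ SubSums S := by
    intro x hx
    rw [hTdef] at hx
    simp only [Finset.coe_insert, Set.mem_insert_iff, Finset.coe_image,
      Set.mem_image, Finset.mem_coe, Finset.mem_univ] at hx
    rcases hx with rfl | ⟨p, -, rfl⟩
    · exact hgmem
    · exact hmem p
  have hle : T.card ≤ fseq S := by
    rw [fseq, ← Set.ncard_coe_finset T]
    exact Set.ncard_le_ncard hsub (Set.toFinite _)
  rw [hTcard] at hle
  rw [hcard]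
  push_cast
  omega
end

section
/- Let k ≥ l ≥ 1 be integers and let a, b, g be elements of a finite abelian group G with b − a = g and ord(g) = 2, such that S = a^k b^l g is zero-sum free. Then f(S) = 2(k + l) + 1. -/
open Multiset

/-- Lemma 2.6: if `k ≥ l ≥ 1`, `b - a = g`, `ord(g) = 2` and `S = aᵏbˡg` is
zero-sum free, then `f(S) = 2(k + l) + 1`. -/
theorem stmt17 {G : Type*} [AddCommGroup G] [Fintype G] (k l : ℕ)
    (hl : 1 ≤ l) (hkl : l ≤ k) (a b g : G) (hg : b - a = g)
    (hord : addOrderOf g = 2)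
    (hS : ZeroSumFree (replicate k a + replicate l b + {g})) :
    fseq (replicate k a + replicate l b + {g}) = 2 * (k + l) + 1 := by
  classical
  set S : Multiset G := replicate k a + replicate l b + {g} with hSdef
  have hg2 : (2 : ℕ) • g = 0 := by rw [← hord]; exact addOrderOf_nsmul_eq_zero g
  have hgne : g ≠ 0 := by
    intro h; rw [h, addOrderOf_zero] at hord; omega
  have hmod : ∀ n : ℕ, n • g = (n % 2) • g := by
    intro n
    conv_lhs => rw [← Nat.div_add_mod n 2]
    rw [add_smul, mul_comm, mul_smul, hg2, smul_zero, zero_add]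
  have hb : b = a + g := by rw [← hg]; abel
  -- condition on (m, d)
  set C : ℕ → ℕ → Prop := fun m d => (1 ≤ m ∧ m ≤ k + l ∧ d ≤ 1) ∨ (m = 0 ∧ d = 1) with hC
  -- construction of subsequences
  have hmem : ∀ m d : ℕ, C m d →
      ∃ T : Multiset G, T ≤ S ∧ T ≠ 0 ∧ T.sum = m • a + d • g := by
    intro m d hmd
    rcases hmd with ⟨hm1, hm2, hd⟩ | ⟨hm0, hd1⟩
    · set i := min m k with hi
      set j := m - i with hj
      set e := (d + j) % 2 with he
      refine ⟨replicate i a + replicate j b + replicate e g, ?_, ?_, ?_⟩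
      · refine add_le_add (add_le_add ?_ ?_) ?_
        · exact replicate_mono a (by omega)
        · exact replicate_mono b (by omega)
        · rw [← replicate_one]
          exact replicate_mono g (by omega)
      · intro h0
        have := congrArg card h0
        simp only [card_add, card_replicate, card_zero] at this
        omega
      · simp only [sum_add, sum_replicate]
        rw [hb, smul_add]
        have h1 : m • a = (i + j) • a := by congr 1; omega
        have h2 : d • g = (j + e) • g := by
          rw [hmod (j + e), hmod d]; congr 1; omega
        rw [h1, h2, add_smul, add_smul]
        abel
    · refine ⟨{g}, le_add_left _ _, ?_, ?_⟩
      · simp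
      · simp [hm0, hd1]
  -- decomposition helper
  have hdecomp : ∀ (A B T : Multiset G), T ≤ A + B →
      ∃ T1 T2, T1 ≤ A ∧ T2 ≤ B ∧ T = T1 + T2 := by
    intro A B T h
    refine ⟨T ∩ A, T - A, inter_le_right, ?_, ?_⟩
    · rw [Multiset.sub_le_iff_le_add]
      exact h.trans_eq (add_comm A B)
    · ext x
      rw [count_add, count_inter, count_sub]
      omega
  -- characterization of SubSums
  have hchar : SubSums S = {x | ∃ m d : ℕ, C m d ∧ x = m • a + d • g} := by
    ext x
    constructor
    · rintro ⟨T, hT, hT0, rfl⟩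
      obtain ⟨T', T3, hT', hT3, rfl⟩ := hdecomp _ _ _ hT
      obtain ⟨T1, T2, hT1, hT2, rfl⟩ := hdecomp _ _ _ hT'
      rw [← replicate_one] at hT3
      obtain ⟨i, hik, rfl⟩ := le_replicate_iff.1 hT1
      obtain ⟨j, hjl, rfl⟩ := le_replicate_iff.1 hT2
      obtain ⟨e, he1, rfl⟩ := le_replicate_iff.1 hT3
      have hsum : (replicate i a + replicate j b + replicate e g).sum
          = (i + j) • a + ((j + e) % 2) • g := by
        simp only [sum_add, sum_replicate]
        rw [hb, smul_add, ← hmod, add_smul, add_smul]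
        abel
      rw [hsum]
      by_cases hm : 1 ≤ i + j
      · exact ⟨i + j, (j + e) % 2, Or.inl ⟨hm, by omega, by omega⟩, rfl⟩
      · have hi0 : i = 0 := by omega
        have hj0 : j = 0 := by omega
        have he0 : e = 1 := by
          by_contra h
          have : e = 0 := by omega
          rw [hi0, hj0, this] at hT0
          simp at hT0
        refine ⟨0, 1, Or.inr ⟨rfl, rfl⟩, ?_⟩
        rw [hi0, hj0, he0]
    · rintro ⟨m, d, hc, rfl⟩
      exact hmem m d hc
  -- injectivity key
  have hkey : ∀ m d m' d' : ℕ, C m d → C m' d' → m' ≤ m →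
      m • a + d • g = m' • a + d' • g → m = m' ∧ d = d' := by
    intro m d m' d' hc hc' hle heq
    have hd1 : d ≤ 1 := by rcases hc with ⟨_, _, h⟩ | ⟨_, h⟩ <;> omega
    have hd1' : d' ≤ 1 := by rcases hc' with ⟨_, _, h⟩ | ⟨_, h⟩ <;> omega
    have e0 : (m - m') • a + d • g = d' • g := by
      have h1 : m' • a + ((m - m') • a + d • g) = m' • a + d' • g := by
        rw [← add_assoc, ← add_smul]
        have h2 : m' + (m - m') = m := by omega
        rw [h2, heq]
      exact add_left_cancel h1
    have e1 : (m - m') • a + ((d + d') % 2) • g = 0 := by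
      rw [← hmod, add_smul, ← add_assoc, e0, ← add_smul, hmod]
      have : (d' + d') % 2 = 0 := by omega
      rw [this, zero_smul]
    rcases Nat.lt_or_ge m' m with hlt | hge
    · exfalso
      have hmkl : m ≤ k + l := by
        rcases hc with ⟨_, h, _⟩ | ⟨h, _⟩ <;> omega
      obtain ⟨T, hT, hT0, hTs⟩ := hmem (m - m') ((d + d') % 2)
        (Or.inl ⟨by omega, by omega, by omega⟩)
      exact hS T hT hT0 (hTs.trans e1)
    · have hmm : m = m' := by omega
      refine ⟨hmm, ?_⟩
      rw [hmm, Nat.sub_self, zero_smul, zero_add] at e1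
      by_contra hdd
      have h2 : (d + d') % 2 = 1 := by omega
      rw [h2, one_smul] at e1
      exact hgne e1
  -- finite set model
  set A : Finset (ℕ × ℕ) := (Finset.Icc 1 (k + l) ×ˢ Finset.Icc 0 1) ∪ {(0, 1)} with hA
  have hAmem : ∀ p : ℕ × ℕ, p ∈ A ↔ C p.1 p.2 := by
    intro p
    simp only [hA, Finset.mem_union, Finset.mem_product, Finset.mem_Icc,
      Finset.mem_singleton, hC]
    constructor
    · rintro (⟨⟨h1, h2⟩, _, h3⟩ | h)
      · exact Or.inl ⟨h1, h2, h3⟩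
      · exact Or.inr ⟨congrArg Prod.fst h, congrArg Prod.snd h⟩
    · rintro (⟨h1, h2, h3⟩ | ⟨h1, h2⟩)
      · exact Or.inl ⟨⟨h1, h2⟩, Nat.zero_le _, h3⟩
      · exact Or.inr (Prod.ext h1 h2)
  have himg : SubSums S = (fun p : ℕ × ℕ => p.1 • a + p.2 • g) '' ↑A := by
    rw [hchar]
    ext x
    simp only [Set.mem_image, Finset.mem_coe, Set.mem_setOf_eq]
    constructor
    · rintro ⟨m, d, hc, rfl⟩
      exact ⟨(m, d), (hAmem (m, d)).2 hc, rfl⟩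
    · rintro ⟨p, hp, rfl⟩
      exact ⟨p.1, p.2, (hAmem p).1 hp, rfl⟩
  have hinj : Set.InjOn (fun p : ℕ × ℕ => p.1 • a + p.2 • g) ↑A := by
    rintro ⟨m, d⟩ hp ⟨m', d'⟩ hq heq
    rw [Finset.mem_coe, hAmem] at hp hq
    simp only at heq
    rcases Nat.le_total m' m with h | h
    · obtain ⟨h1, h2⟩ := hkey m d m' d' hp hq h heq
      simp [h1, h2]
    · obtain ⟨h1, h2⟩ := hkey m' d' m d hq hp h heq.symm
      simp [h1, h2]
  have hcard : A.card = 2 * (k + l) + 1 := by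
    rw [hA, Finset.card_union_of_disjoint, Finset.card_product]
    · simp only [Nat.card_Icc, Finset.card_singleton]
      omega
    · simp [Finset.disjoint_singleton_right]
  show (SubSums S).ncard = _
  rw [himg, Set.ncard_image_of_injOn hinj, Set.ncard_coe_finset, hcard]
end

section
/- Let G be a finite abelian group and let S be a zero-sum free sequence over G containing no element of order 2, which admits a decomposition S = S₁·⋯·S_x where each S_i is squarefree of length |S_i| ≥ 3. Then f(S) ≥ 2|S|. -/
set_option linter.unusedSectionVars false
set_option linter.unusedVariables false
set_option maxHeartbeats 1000000


open Multiset

section Helpers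
variable {G : Type*} [AddCommGroup G] [DecidableEq G] {S T : Multiset G} {g h z : G}

lemma zsf_mono (hT : T ≤ S) (hS : ZeroSumFree S) : ZeroSumFree T :=
  fun U hU => hS U (hU.trans hT)

lemma mem_subsums_single (hg : g ∈ S) : g ∈ SubSums S :=
  ⟨{g}, by simpa using hg, by simp, by simp⟩

lemma pair_le (hg : g ∈ S) (hh : h ∈ S) (hne : g ≠ h) : ({g, h} : Multiset G) ≤ S := by
  have h1 : h ∈ S.erase g := by
    rw [Multiset.mem_erase_of_ne (Ne.symm hne)]; exact hh
  have : ({h} : Multiset G) ≤ S.erase g := by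
    rwa [Multiset.singleton_le]
  calc ({g, h} : Multiset G) = g ::ₘ {h} := rfl
    _ ≤ g ::ₘ S.erase g := Multiset.cons_le_cons g this
    _ = S := Multiset.cons_erase hg

lemma mem_subsums_pair (hg : g ∈ S) (hh : h ∈ S) (hne : g ≠ h) : g + h ∈ SubSums S :=
  ⟨{g, h}, pair_le hg hh hne, by simp, by simp⟩

lemma mem_subsums_sum (hS : S ≠ 0) : S.sum ∈ SubSums S := ⟨S, le_rfl, hS, rfl⟩

/-- complement of T sums to σ - T.sum -/
lemma sum_sub_of_le (hT : T ≤ S) : (S - T).sum = S.sum - T.sum := by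
  have h := tsub_add_cancel_of_le hT
  have := congrArg Multiset.sum h
  rw [Multiset.sum_add] at this
  exact eq_sub_of_add_eq this

lemma mem_subsums_compl (hT : T ≤ S) (hlt : T.card < S.card) :
    S.sum - T.sum ∈ SubSums S := by
  refine ⟨S - T, tsub_le_self, ?_, sum_sub_of_le hT⟩
  intro h0
  have hc := congrArg Multiset.card (tsub_add_cancel_of_le hT)
  rw [Multiset.card_add, h0] at hc
  simp at hc
  omega

/-- key complement fact: a proper sub-multiset cannot sum to σ -/
lemma sum_ne_of_proper (hS : ZeroSumFree S) (hT : T ≤ S) (hlt : T.card < S.card) :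
    T.sum ≠ S.sum := by
  intro he
  have h0 : (S - T) ≠ 0 := by
    intro h0
    have hc := congrArg Multiset.card (tsub_add_cancel_of_le hT)
    rw [Multiset.card_add, h0] at hc
    simp at hc; omega
  exact hS (S - T) tsub_le_self h0 (by rw [sum_sub_of_le hT, he, sub_self])

lemma zsf_ne_zero (hS : ZeroSumFree S) (hg : g ∈ S) : g ≠ 0 := by
  intro h0
  exact hS {g} (by simpa using hg) (by simp) (by simp [h0])

lemma zsf_pair_ne_zero (hS : ZeroSumFree S) (hg : g ∈ S) (hh : h ∈ S) (hne : g ≠ h) :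
    g + h ≠ 0 := by
  intro h0
  exact hS {g, h} (pair_le hg hh hne) (by simp) (by simpa using h0)

lemma zsf_mem_ne_sum (hS : ZeroSumFree S) (hg : g ∈ S) (hk : 2 ≤ S.card) : g ≠ S.sum := by
  have : ({g} : Multiset G) ≤ S := by simpa using hg
  have := sum_ne_of_proper hS this (by simp only [Multiset.card_singleton]; omega)
  simpa using this

lemma zsf_sum_ne_zero (hS : ZeroSumFree S) (h0 : S ≠ 0) : S.sum ≠ 0 := hS S le_rfl h0

lemma order_two (h2 : ∀ g ∈ S, addOrderOf g ≠ 2) (hS : ZeroSumFree S) (hg : g ∈ S)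
    (hgg : g + g = 0) : False := by
  have hg0 : g ≠ 0 := zsf_ne_zero hS hg
  have : (2 : ℕ) • g = 0 := by rw [two_nsmul]; exact hgg
  exact h2 g hg (addOrderOf_eq_prime this hg0)

end Helpers

section Sub
variable {G : Type*} [AddCommGroup G] [Fintype G] [DecidableEq G] {S₁ S₂ : Multiset G}

lemma subsums_mono (h : S₁ ≤ S₂) : SubSums S₁ ⊆ SubSums S₂ := by
  rintro x ⟨T, hT, h0, hs⟩
  exact ⟨T, hT.trans h, h0, hs⟩

lemma fseq_superadd (hS : ZeroSumFree (S₁ + S₂)) :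
    fseq S₁ + fseq S₂ ≤ fseq (S₁ + S₂) := by
  classical
  set f : G → G := fun t => S₁.sum + t with hf
  have hsub : SubSums S₁ ∪ (f '' SubSums S₂) ⊆ SubSums (S₁ + S₂) := by
    rintro x (hx | ⟨t, ⟨U, hU, hU0, hUs⟩, rfl⟩)
    · exact subsums_mono (le_add_right _ _) hx
    · refine ⟨S₁ + U, add_le_add le_rfl hU, ?_, by simp [hUs, hf]⟩
      intro h0
      exact hU0 (Multiset.le_zero.mp (le_add_self.trans h0.le))
  have hdisj : Disjoint (SubSums S₁) (f '' SubSums S₂) := by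
    rw [Set.disjoint_left]
    rintro x ⟨T, hT, hT0, hTs⟩ ⟨t, ⟨U, hU, hU0, hUs⟩, hfx⟩
    have hW : (S₁ - T) + U ≤ S₁ + S₂ := add_le_add tsub_le_self hU
    have hW0 : (S₁ - T) + U ≠ 0 := by
      intro h0
      exact hU0 (Multiset.le_zero.mp (le_add_self.trans h0.le))
    apply hS _ hW hW0
    have hsumc : (S₁ - T).sum = S₁.sum - T.sum := by
      have h := tsub_add_cancel_of_le hT
      have := congrArg Multiset.sum h
      rw [Multiset.sum_add] at this
      exact eq_sub_of_add_eq this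
    rw [Multiset.sum_add, hsumc, hTs, hUs]
    simp only [hf] at hfx
    rw [← hfx]
    abel
  have h1 : fseq S₁ + fseq S₂ = (SubSums S₁ ∪ (f '' SubSums S₂)).ncard := by
    rw [Set.ncard_union_eq hdisj (Set.toFinite _) (Set.toFinite _)]
    unfold fseq
    rw [Set.ncard_image_of_injective _ (add_right_injective S₁.sum)]
  rw [h1]
  exact Set.ncard_le_ncard hsub (Set.toFinite _)

end Sub

section More
variable {G : Type*} [AddCommGroup G] [DecidableEq G] {S M : Multiset G} {g h z : G}

lemma nodup_sub_le (hND : S.Nodup) (hM : M.Nodup) (hmem : ∀ x ∈ M, x ∈ S) : M ≤ S := by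
  rw [Multiset.le_iff_count]
  intro x
  by_cases hx : x ∈ M
  · have h1 : M.count x = 1 := Multiset.count_eq_one_of_mem hM hx
    have h2 : 1 ≤ S.count x := (Multiset.one_le_count_iff_mem).mpr (hmem x hx)
    omega
  · simp [Multiset.count_eq_zero_of_notMem hx]

/-- counting: a finset inside SubSums bounds fseq from below -/
lemma card_le_fseq [Fintype G] (N : Finset G) (h : ↑N ⊆ SubSums S) : N.card ≤ fseq S := by
  have := Set.ncard_le_ncard h (Set.toFinite _)
  simpa [fseq, Set.ncard_coe_finset] using this

end More

section SB
variable {G : Type*} [AddCommGroup G] [DecidableEq G] {S : Multiset G} {g h x y z v : G}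


/-- S1 : σ + x  is never of the form σ - z -/
lemma sb1 (hzsf : ZeroSumFree S) (h2 : ∀ g ∈ S, addOrderOf g ≠ 2)
    (hx : x ∈ S) (hz : z ∈ S) : S.sum + x ≠ S.sum - z := by
  intro e
  have h0 : x + z = 0 := by
    have key : x + z = (S.sum + x) - (S.sum - z) := by abel
    rw [e, sub_self] at key; exact key
  rcases eq_or_ne x z with rfl | hne
  · exact order_two h2 hzsf hx h0
  · exact zsf_pair_ne_zero hzsf hx hz hne h0

lemma sb2 (hzsf : ZeroSumFree S) (hx : x ∈ S) : S.sum + x ≠ S.sum := by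
  intro e
  exact zsf_ne_zero hzsf hx (add_eq_left.mp e)

/-- S2 : for g₀,h ∈ I distinct,  g₀ + h ≠ σ - z  (k ≥ 4) -/
lemma sb3 (hzsf : ZeroSumFree S) (hk4 : 4 ≤ Multiset.card S) (hND : S.Nodup)
    (hgS : g ∈ S) (hg : g + g = S.sum) (hhS : h ∈ S) (hh : h + h = S.sum) (hne : h ≠ g)
    (hz : z ∈ S) : g + h ≠ S.sum - z := by
  intro e
  have e3 : g + h + z = S.sum := by
    have key : g + h + z = (S.sum - z) + z := by rw [← e]
    rw [sub_add_cancel] at key; exact key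
  rcases eq_or_ne z g with hzg | hzg
  · apply zsf_ne_zero hzsf hhS
    have key : h = (g + h + z) - (g + z) := by abel
    rw [e3, hzg, hg] at key
    simpa using key
  rcases eq_or_ne z h with hzh | hzh
  · apply zsf_ne_zero hzsf hgS
    have key : g = (g + h + z) - (h + z) := by abel
    rw [e3, hzh, hh] at key
    simpa using key
  · -- triple sums to σ, proper since k ≥ 4
    have hM : ({g, h, z} : Multiset G).Nodup := by
      simp only [Multiset.insert_eq_cons, Multiset.nodup_cons, Multiset.mem_cons,
        Multiset.mem_singleton, Multiset.nodup_singleton, and_true]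
      push_neg
      exact ⟨⟨Ne.symm hne, Ne.symm hzg⟩, Ne.symm hzh⟩
    have hle : ({g, h, z} : Multiset G) ≤ S :=
      nodup_sub_le hND hM (by intro w hw; simp at hw; rcases hw with rfl|rfl|rfl <;> assumption)
    apply sum_ne_of_proper hzsf hle (by simp; omega)
    have : g + (h + z) = S.sum := by rw [← e3]; abel
    simpa using this

lemma sb4 (hzsf : ZeroSumFree S) (hk3 : 3 ≤ Multiset.card S)
    (hgS : g ∈ S) (hhS : h ∈ S) (hne : h ≠ g) : g + h ≠ S.sum := by
  intro e
  apply sum_ne_of_proper hzsf (pair_le hgS hhS (Ne.symm hne)) (by simp; omega)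
  simpa using e

/-- S5 : σ + x = y impossible for x,y ∈ I -/
lemma sb5 (hzsf : ZeroSumFree S) (h2 : ∀ g ∈ S, addOrderOf g ≠ 2) (hS0 : S ≠ 0)
    (hxS : x ∈ S) (hx : x + x = S.sum) (hyS : y ∈ S) (hy : y + y = S.sum) :
    S.sum + x ≠ y := by
  intro e
  have h0 : y + x = 0 := by
    have key : y + x = (S.sum + x) - y + (y + y) - S.sum := by abel
    rw [e, sub_self, zero_add, hy, sub_self] at key; exact key
  rcases eq_or_ne y x with rfl | hne
  · exact order_two h2 hzsf hxS h0
  · exact zsf_pair_ne_zero hzsf hyS hxS hne h0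

/-- S6 : x + y = z impossible for x,y,z ∈ I -/
lemma sb6 (hzsf : ZeroSumFree S) (hS0 : S ≠ 0)
    (hxS : x ∈ S) (hx : x + x = S.sum) (hyS : y ∈ S) (hy : y + y = S.sum)
    (hzS : z ∈ S) (hz : z + z = S.sum) : x + y ≠ z := by
  intro e
  apply zsf_sum_ne_zero hzsf hS0
  have key : S.sum = ((x + y) + (x + y)) - (z + z) := by
    have h1 : (x + y) + (x + y) = (x + x) + (y + y) := by abel
    rw [h1, hx, hy, hz]; abel
  rw [e, hz] at key
  simpa using key

/-- S7 : x + y = σ + v impossible for x,y,v ∈ I -/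
lemma sb7 (hσ0 : S.sum ≠ 0)
    (hx : x + x = S.sum) (hy : y + y = S.sum) (hv : v + v = S.sum) :
    x + y ≠ S.sum + v := by
  intro e
  apply hσ0
  have key : S.sum + S.sum = (x + y) + (x + y) := by
    have h1 : (x + y) + (x + y) = (x + x) + (y + y) := by abel
    rw [h1, hx, hy]
  rw [e] at key
  have key2 : (S.sum + v) + (S.sum + v) = (S.sum + S.sum) + (v + v) := by abel
  rw [key2, hv] at key
  exact left_eq_add.mp key

end SB

section CU
variable {G : Type*} [AddCommGroup G] [DecidableEq G] {S : Multiset G}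

lemma claimU (hND : S.Nodup) (hzsf : ZeroSumFree S) (h2 : ∀ g ∈ S, addOrderOf g ≠ 2)
    (hk2 : 2 ≤ Multiset.card S) (hk5 : Multiset.card S ≤ 5) (hS0 : S ≠ 0)
    {g₀ h h' : G}
    (hg₀S : g₀ ∈ S) (hg₀ : g₀ + g₀ = S.sum)
    (hhS : h ∈ S) (hhσ : h + h = S.sum) (hneh : h ≠ g₀)
    (hh'S : h' ∈ S) (hh'σ : h' + h' = S.sum) (hneh' : h' ≠ g₀) (hne : h ≠ h')
    (ha : g₀ + h ∈ S) (hb : S.sum + h ∈ S) (ha' : g₀ + h' ∈ S) (hb' : S.sum + h' ∈ S) :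
    False := by
  have hσ0 : S.sum ≠ 0 := zsf_sum_ne_zero hzsf hS0
  have n4 : g₀ ≠ g₀ + h := fun e => zsf_ne_zero hzsf hhS (left_eq_add.mp e)
  have n5 : g₀ ≠ g₀ + h' := fun e => zsf_ne_zero hzsf hh'S (left_eq_add.mp e)
  have n6 : g₀ ≠ S.sum + h := Ne.symm (sb5 hzsf h2 hS0 hhS hhσ hg₀S hg₀)
  have n7 : g₀ ≠ S.sum + h' := Ne.symm (sb5 hzsf h2 hS0 hh'S hh'σ hg₀S hg₀)
  have n8 : h ≠ g₀ + h := fun e => zsf_ne_zero hzsf hg₀S (right_eq_add.mp e)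
  have n9 : h ≠ g₀ + h' := Ne.symm (sb6 hzsf hS0 hg₀S hg₀ hh'S hh'σ hhS hhσ)
  have n10 : h ≠ S.sum + h := Ne.symm (sb5 hzsf h2 hS0 hhS hhσ hhS hhσ)
  have n11 : h ≠ S.sum + h' := Ne.symm (sb5 hzsf h2 hS0 hh'S hh'σ hhS hhσ)
  have n12 : h' ≠ g₀ + h := Ne.symm (sb6 hzsf hS0 hg₀S hg₀ hhS hhσ hh'S hh'σ)
  have n13 : h' ≠ g₀ + h' := fun e => zsf_ne_zero hzsf hg₀S (right_eq_add.mp e)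
  have n14 : h' ≠ S.sum + h := Ne.symm (sb5 hzsf h2 hS0 hhS hhσ hh'S hh'σ)
  have n15 : h' ≠ S.sum + h' := Ne.symm (sb5 hzsf h2 hS0 hh'S hh'σ hh'S hh'σ)
  have n16 : g₀ + h ≠ g₀ + h' := fun e => hne (add_left_cancel e)
  have n17 : g₀ + h ≠ S.sum + h := fun e =>
    zsf_mem_ne_sum hzsf hg₀S hk2 (add_right_cancel e)
  have n18 : g₀ + h ≠ S.sum + h' := sb7 hσ0 hg₀ hhσ hh'σ
  have n19 : g₀ + h' ≠ S.sum + h := sb7 hσ0 hg₀ hh'σ hhσ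
  have n20 : g₀ + h' ≠ S.sum + h' := fun e =>
    zsf_mem_ne_sum hzsf hg₀S hk2 (add_right_cancel e)
  have n21 : S.sum + h ≠ S.sum + h' := fun e => hne (add_left_cancel e)
  set F : Finset G :=
    insert g₀ (insert h (insert h' (insert (g₀ + h) (insert (g₀ + h')
      (insert (S.sum + h) {S.sum + h'}))))) with hF
  have hFsub : F ⊆ S.toFinset := by
    intro w hw
    simp only [hF, Finset.mem_insert, Finset.mem_singleton] at hw
    rw [Multiset.mem_toFinset]
    rcases hw with rfl|rfl|rfl|rfl|rfl|rfl|rfl <;> assumption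
  have hFcard : F.card = 7 := by
    rw [hF]
    rw [Finset.card_insert_of_notMem (by
      simp only [Finset.mem_insert, Finset.mem_singleton]
      push_neg
      exact ⟨Ne.symm hneh, Ne.symm hneh', n4, n5, n6, n7⟩)]
    rw [Finset.card_insert_of_notMem (by
      simp only [Finset.mem_insert, Finset.mem_singleton]
      push_neg
      exact ⟨hne, n8, n9, n10, n11⟩)]
    rw [Finset.card_insert_of_notMem (by
      simp only [Finset.mem_insert, Finset.mem_singleton]
      push_neg
      exact ⟨n12, n13, n14, n15⟩)]
    rw [Finset.card_insert_of_notMem (by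
      simp only [Finset.mem_insert, Finset.mem_singleton]
      push_neg
      exact ⟨n16, n17, n18⟩)]
    rw [Finset.card_insert_of_notMem (by
      simp only [Finset.mem_insert, Finset.mem_singleton]
      push_neg
      exact ⟨n19, n20⟩)]
    rw [Finset.card_insert_of_notMem (by
      simp only [Finset.mem_singleton]
      exact n21)]
    simp
  have := Finset.card_le_card hFsub
  rw [hFcard, Multiset.toFinset_card_of_nodup hND] at this
  omega

end CU

section EG
variable {G : Type*} [AddCommGroup G] [DecidableEq G] {S : Multiset G}


set_option maxHeartbeats 2000000 in
lemma endgame (hND : S.Nodup) (hzsf : ZeroSumFree S) (h2 : ∀ g ∈ S, addOrderOf g ≠ 2)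
    (hk2 : 2 ≤ Multiset.card S) (hk5 : Multiset.card S ≤ 5) (hS0 : S ≠ 0)
    {g₀ h : G}
    (hg₀S : g₀ ∈ S) (hg₀ : g₀ + g₀ = S.sum)
    (hhS : h ∈ S) (hhσ : h + h = S.sum) (hneh : h ≠ g₀)
    (ha : g₀ + h ∈ S) (hb : S.sum + h ∈ S) (hx : S.sum + g₀ ∈ S) :
    (S.sum + S.sum ∈ SubSums S) ∧ (S.sum + S.sum ∉ S) ∧
    (∀ z ∈ S, S.sum + S.sum ≠ S.sum - z) ∧ (S.sum + S.sum ≠ S.sum) ∧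
    (∀ h' ∈ S, h' + h' = S.sum → h' ≠ g₀ → h' = h) := by
  have hσ0 : S.sum ≠ 0 := zsf_sum_ne_zero hzsf hS0
  -- pairwise distinctness of the five elements
  have d2 : g₀ ≠ g₀ + h := fun e => zsf_ne_zero hzsf hhS (left_eq_add.mp e)
  have d3 : g₀ ≠ S.sum + h := Ne.symm (sb5 hzsf h2 hS0 hhS hhσ hg₀S hg₀)
  have d4 : g₀ ≠ S.sum + g₀ := fun e => hσ0 (right_eq_add.mp e)
  have d5 : h ≠ g₀ + h := fun e => zsf_ne_zero hzsf hg₀S (right_eq_add.mp e)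
  have d6 : h ≠ S.sum + h := Ne.symm (sb5 hzsf h2 hS0 hhS hhσ hhS hhσ)
  have d7 : h ≠ S.sum + g₀ := Ne.symm (sb5 hzsf h2 hS0 hg₀S hg₀ hhS hhσ)
  have d8 : g₀ + h ≠ S.sum + h := fun e =>
    zsf_mem_ne_sum hzsf hg₀S hk2 (add_right_cancel e)
  have d9 : g₀ + h ≠ S.sum + g₀ := fun e =>
    zsf_mem_ne_sum hzsf hhS hk2 (add_left_cancel (e.trans (add_comm _ _)))
  have d10 : S.sum + h ≠ S.sum + g₀ := fun e => hneh (add_left_cancel e)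
  -- S is exactly these five elements
  set M : Multiset G := g₀ ::ₘ h ::ₘ (g₀ + h) ::ₘ (S.sum + h) ::ₘ {S.sum + g₀} with hM
  have hMnd : M.Nodup := by
    simp only [hM, Multiset.nodup_cons, Multiset.mem_cons, Multiset.mem_singleton,
      Multiset.nodup_singleton, and_true]
    push_neg
    exact ⟨⟨Ne.symm hneh, d2, d3, d4⟩, ⟨d5, d6, d7⟩, ⟨d8, d9⟩, d10⟩
  have hMle : M ≤ S := by
    apply nodup_sub_le hND hMnd
    intro w hw
    simp only [hM, Multiset.mem_cons, Multiset.mem_singleton] at hw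
    rcases hw with rfl|rfl|rfl|rfl|rfl <;> assumption
  have hMcard : Multiset.card M = 5 := by simp [hM]
  have hSM : M = S := Multiset.eq_of_le_of_card_le hMle (by omega)
  have hsum : S.sum = g₀ + (h + ((g₀ + h) + ((S.sum + h) + (S.sum + g₀)))) := by
    conv_lhs => rw [← hSM]
    simp [hM]
  have e0 : g₀ + g₀ + g₀ + h + h + h + S.sum = 0 := by
    calc g₀ + g₀ + g₀ + h + h + h + S.sum
        = (g₀ + (h + ((g₀ + h) + ((S.sum + h) + (S.sum + g₀))))) - S.sum := by abel
      _ = S.sum - S.sum := by rw [← hsum]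
      _ = 0 := sub_self _
  have d0 : h + h = g₀ + g₀ := hhσ.trans hg₀.symm
  have e1 : g₀ + g₀ + g₀ + g₀ + g₀ + g₀ + g₀ + h = 0 := by
    calc g₀ + g₀ + g₀ + g₀ + g₀ + g₀ + g₀ + h
        = (g₀ + g₀ + g₀ + h + h + h + S.sum) + ((g₀ + g₀) - (h + h)) + ((g₀ + g₀) - S.sum) := by
          abel
      _ = 0 + ((g₀ + g₀) - (g₀ + g₀)) + ((g₀ + g₀) - S.sum) := by rw [e0, d0]
      _ = 0 := by rw [hg₀]; abel
  have e2 : (16 : ℕ) • g₀ = 0 := by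
    have key : (16 : ℕ) • g₀ = (g₀ + g₀ + g₀ + g₀ + g₀ + g₀ + g₀ + h) +
        (g₀ + g₀ + g₀ + g₀ + g₀ + g₀ + g₀ + h) + ((g₀ + g₀) - (h + h)) := by abel
    rw [e1, d0] at key
    simpa using key
  have e3 : h = (9 : ℕ) • g₀ := by
    have key : h - (9 : ℕ) • g₀ = (g₀ + g₀ + g₀ + g₀ + g₀ + g₀ + g₀ + h) - (16 : ℕ) • g₀ := by
      abel
    rw [e1, e2] at key
    simp only [sub_zero] at key
    exact sub_eq_zero.mp (by simpa using key)
  have σ2 : S.sum = (2 : ℕ) • g₀ := by rw [← hg₀]; abel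
  have e8 : ¬ (8 : ℕ) • g₀ = 0 := by
    intro e
    apply hneh
    rw [e3, show (9 : ℕ) • g₀ = (8 : ℕ) • g₀ + g₀ by abel, e, zero_add]
  have ord : addOrderOf g₀ = 16 := by
    have hd : addOrderOf g₀ ∣ 16 := addOrderOf_dvd_iff_nsmul_eq_zero.mpr e2
    have hnd : ¬ addOrderOf g₀ ∣ 8 := fun hdvd =>
      e8 (addOrderOf_dvd_iff_nsmul_eq_zero.mp hdvd)
    have h16 : addOrderOf g₀ ≤ 16 := Nat.le_of_dvd (by norm_num) hd
    interval_cases (addOrderOf g₀) <;> omega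
  have nz : ∀ t : ℕ, ¬ (16 ∣ t) → (t : ℕ) • g₀ ≠ 0 := by
    intro t ht h0
    exact ht (ord ▸ addOrderOf_dvd_iff_nsmul_eq_zero.mpr h0)
  have neq : ∀ u v : ℕ, v ≤ u → ¬ (16 ∣ (u - v)) → (u : ℕ) • g₀ ≠ (v : ℕ) • g₀ := by
    intro u v huv hnd e
    exact nz (u - v) hnd (by rw [sub_nsmul _ huv, e]; abel)
  have a10 : g₀ + h = (10 : ℕ) • g₀ := by rw [e3]; abel
  have b11 : S.sum + h = (11 : ℕ) • g₀ := by rw [σ2, e3]; abel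
  have x3 : S.sum + g₀ = (3 : ℕ) • g₀ := by rw [σ2]; abel
  have ss4 : S.sum + S.sum = (4 : ℕ) • g₀ := by rw [σ2]; abel
  have g1 : (1 : ℕ) • g₀ = g₀ := one_nsmul g₀
  refine ⟨?_, ?_, ?_, ?_, ?_⟩
  · -- σ + σ ∈ SubSums S
    have := mem_subsums_pair hhS hb d6
    have he : h + (S.sum + h) = S.sum + S.sum := by
      rw [show h + (S.sum + h) = S.sum + (h + h) by abel, hhσ]
    rwa [he] at this
  · -- σ + σ ∉ S
    intro hmem0
    have hmem : S.sum + S.sum ∈ M := by rw [hSM]; exact hmem0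
    simp only [hM, Multiset.mem_cons, Multiset.mem_singleton] at hmem
    rcases hmem with e|e|e|e|e
    · rw [ss4] at e; exact neq 4 1 (by norm_num) (by norm_num) (by rw [one_nsmul]; exact e)
    · rw [ss4, e3] at e; exact (neq 9 4 (by norm_num) (by norm_num)) e.symm
    · rw [ss4, a10] at e; exact (neq 10 4 (by norm_num) (by norm_num)) e.symm
    · rw [ss4, b11] at e; exact (neq 11 4 (by norm_num) (by norm_num)) e.symm
    · rw [ss4, x3] at e; exact neq 4 3 (by norm_num) (by norm_num) e
  · -- σ + σ ∉ B
    intro z hz0 e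
    have hz : z ∈ M := by rw [hSM]; exact hz0
    simp only [hM, Multiset.mem_cons, Multiset.mem_singleton] at hz
    have step : ∀ t : ℕ, z = (t : ℕ) • g₀ → ¬ (16 ∣ (2 + t)) → False := by
      intro t hzt hdvd
      rw [ss4, σ2, hzt] at e
      have e2' : ((4 : ℕ) + t) • g₀ = (2 : ℕ) • g₀ := by
        rw [add_nsmul, e, sub_add_cancel]
      exact neq (4 + t) 2 (by omega) (by omega) e2'
    rcases hz with rfl|rfl|rfl|rfl|rfl
    · exact step 1 (by rw [one_nsmul]) (by norm_num)
    · exact step 9 e3 (by norm_num)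
    · exact step 10 a10 (by norm_num)
    · exact step 11 b11 (by norm_num)
    · exact step 3 x3 (by norm_num)
  · -- σ + σ ≠ σ
    intro e
    exact hσ0 (add_eq_right.mp e)
  · -- uniqueness of h
    intro h' hh'S0 hh'σ hne'
    have hh'S : h' ∈ M := by rw [hSM]; exact hh'S0
    simp only [hM, Multiset.mem_cons, Multiset.mem_singleton] at hh'S
    have step : ∀ t : ℕ, h' = (t : ℕ) • g₀ → ¬ (16 ∣ (2*t - 2)) → 2 ≤ 2*t → False := by
      intro t hht hdvd hle
      rw [hht] at hh'σ
      have key : (2*t : ℕ) • g₀ = (2 : ℕ) • g₀ := by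
        rw [two_mul, add_nsmul, hh'σ, σ2]
      exact neq (2*t) 2 hle hdvd key
    rcases hh'S with rfl|rfl|rfl|rfl|rfl
    · exact absurd rfl hne'
    · rfl
    · exact (step 10 a10 (by norm_num) (by norm_num)).elim
    · exact (step 11 b11 (by norm_num) (by norm_num)).elim
    · exact (step 3 x3 (by norm_num) (by norm_num)).elim

end EG

section EX
variable {G : Type*} [AddCommGroup G] [DecidableEq G] {S : Multiset G}


lemma extra (S : Multiset G) (hND : S.Nodup) (hzsf : ZeroSumFree S)
    (h2 : ∀ g ∈ S, addOrderOf g ≠ 2) (hk4 : 4 ≤ Multiset.card S) (hk5 : Multiset.card S ≤ 5)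
    (g₀ : G) (hg₀S : g₀ ∈ S) (hg₀ : g₀ + g₀ = S.sum) :
    ∃ N : Finset G,
      (S.toFinset.filter (fun g => g + g = S.sum)).card = N.card + 1 ∧
      (↑N : Set G) ⊆ SubSums S ∧
      (∀ v ∈ N, v ∉ S ∧ (∀ z ∈ S, v ≠ S.sum - z) ∧ v ≠ S.sum) := by
  classical
  have hS0 : S ≠ 0 := by intro h0; rw [h0] at hk4; simp at hk4
  have hσ0 : S.sum ≠ 0 := zsf_sum_ne_zero hzsf hS0
  have hk2 : 2 ≤ Multiset.card S := by omega
  set If := S.toFinset.filter (fun g => g + g = S.sum) with hIf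
  have hg₀I : g₀ ∈ If := by
    rw [hIf, Finset.mem_filter, Multiset.mem_toFinset]; exact ⟨hg₀S, hg₀⟩
  set J := If.erase g₀ with hJdef
  have hJ : ∀ w ∈ J, w ∈ S ∧ w + w = S.sum ∧ w ≠ g₀ := by
    intro w hw
    rw [hJdef, Finset.mem_erase, hIf, Finset.mem_filter, Multiset.mem_toFinset] at hw
    exact ⟨hw.2.1, hw.2.2, hw.1⟩
  set ν : G → G := fun w =>
    if g₀ + w ∈ S then
      (if S.sum + w ∈ S then (if S.sum + g₀ ∈ S then S.sum + S.sum else S.sum + g₀)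
       else S.sum + w)
    else g₀ + w with hν
  have good : ∀ w ∈ J, (ν w ∈ SubSums S) ∧ ν w ∉ S ∧
      (∀ z ∈ S, ν w ≠ S.sum - z) ∧ ν w ≠ S.sum := by
    intro w hw
    obtain ⟨hwS, hwσ, hwne⟩ := hJ w hw
    by_cases c1 : g₀ + w ∈ S
    · by_cases c2 : S.sum + w ∈ S
      · by_cases c3 : S.sum + g₀ ∈ S
        · have hνw : ν w = S.sum + S.sum := by simp [hν, c1, c2, c3]
          obtain ⟨m1, m2, m3, m4, _⟩ :=
            endgame hND hzsf h2 hk2 hk5 hS0 hg₀S hg₀ hwS hwσ hwne c1 c2 c3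
          rw [hνw]
          exact ⟨m1, m2, m3, m4⟩
        · have hνw : ν w = S.sum + g₀ := by simp [hν, c1, c2, c3]
          rw [hνw]
          refine ⟨?_, c3, fun z hz => sb1 hzsf h2 hg₀S hz, sb2 hzsf hg₀S⟩
          have hne2 : w ≠ g₀ + w := fun e => zsf_ne_zero hzsf hg₀S (right_eq_add.mp e)
          have := mem_subsums_pair hwS c1 hne2
          have he : w + (g₀ + w) = S.sum + g₀ := by
            rw [show w + (g₀ + w) = (w + w) + g₀ by abel, hwσ]
          rwa [he] at this
      · have hνw : ν w = S.sum + w := by simp [hν, c1, c2]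
        rw [hνw]
        refine ⟨?_, c2, fun z hz => sb1 hzsf h2 hwS hz, sb2 hzsf hwS⟩
        have hne2 : g₀ ≠ g₀ + w := fun e => zsf_ne_zero hzsf hwS (left_eq_add.mp e)
        have := mem_subsums_pair hg₀S c1 hne2
        have he : g₀ + (g₀ + w) = S.sum + w := by
          rw [show g₀ + (g₀ + w) = (g₀ + g₀) + w by abel, hg₀]
        rwa [he] at this
    · have hνw : ν w = g₀ + w := by simp [hν, c1]
      rw [hνw]
      exact ⟨mem_subsums_pair hg₀S hwS (Ne.symm hwne), c1,
        fun z hz => sb3 hzsf hk4 hND hg₀S hg₀ hwS hwσ hwne hz,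
        sb4 hzsf (by omega) hg₀S hwS hwne⟩
  have hinj : Set.InjOn ν ↑J := by
    intro w hw w' hw' he
    by_contra hne
    obtain ⟨hwS, hwσ, hwne⟩ := hJ w (by simpa using hw)
    obtain ⟨hw'S, hw'σ, hw'ne⟩ := hJ w' (by simpa using hw')
    by_cases c1 : g₀ + w ∈ S
    · by_cases c2 : S.sum + w ∈ S
      · by_cases c3 : S.sum + g₀ ∈ S
        · -- endgame at w : uniqueness
          obtain ⟨_, _, _, _, uniq⟩ :=
            endgame hND hzsf h2 hk2 hk5 hS0 hg₀S hg₀ hwS hwσ hwne c1 c2 c3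
          exact hne ((uniq w' hw'S hw'σ hw'ne).symm)
        · -- ν w = σ + g₀
          have hνw : ν w = S.sum + g₀ := by simp [hν, c1, c2, c3]
          by_cases c1' : g₀ + w' ∈ S
          · by_cases c2' : S.sum + w' ∈ S
            · -- both double clash
              exact claimU hND hzsf h2 hk2 hk5 hS0 hg₀S hg₀ hwS hwσ hwne hw'S hw'σ hw'ne hne
                c1 c2 c1' c2'
            · have hνw' : ν w' = S.sum + w' := by simp [hν, c1', c2']
              rw [hνw, hνw'] at he
              exact hw'ne (add_left_cancel he).symm
          · have hνw' : ν w' = g₀ + w' := by simp [hν, c1']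
            rw [hνw, hνw'] at he
            apply zsf_mem_ne_sum hzsf hw'S hk2
            exact (add_left_cancel ((add_comm g₀ S.sum ▸ he))).symm
      · -- ν w = σ + w
        have hνw : ν w = S.sum + w := by simp [hν, c1, c2]
        by_cases c1' : g₀ + w' ∈ S
        · by_cases c2' : S.sum + w' ∈ S
          · by_cases c3 : S.sum + g₀ ∈ S
            · obtain ⟨_, _, _, _, uniq⟩ :=
                endgame hND hzsf h2 hk2 hk5 hS0 hg₀S hg₀ hw'S hw'σ hw'ne c1' c2' c3
              exact hne (uniq w hwS hwσ hwne)
            · have hνw' : ν w' = S.sum + g₀ := by simp [hν, c1', c2', c3]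
              rw [hνw, hνw'] at he
              exact hwne (add_left_cancel he)
          · have hνw' : ν w' = S.sum + w' := by simp [hν, c1', c2']
            rw [hνw, hνw'] at he
            exact hne (add_left_cancel he)
        · have hνw' : ν w' = g₀ + w' := by simp [hν, c1']
          rw [hνw, hνw'] at he
          exact sb7 hσ0 hg₀ hw'σ hwσ he.symm
    · -- ν w = g₀ + w
      have hνw : ν w = g₀ + w := by simp [hν, c1]
      by_cases c1' : g₀ + w' ∈ S
      · by_cases c2' : S.sum + w' ∈ S
        · by_cases c3 : S.sum + g₀ ∈ S
          · obtain ⟨_, _, _, _, uniq⟩ :=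
              endgame hND hzsf h2 hk2 hk5 hS0 hg₀S hg₀ hw'S hw'σ hw'ne c1' c2' c3
            exact hne (uniq w hwS hwσ hwne)
          · have hνw' : ν w' = S.sum + g₀ := by simp [hν, c1', c2', c3]
            rw [hνw, hνw'] at he
            apply zsf_mem_ne_sum hzsf hwS hk2
            exact add_left_cancel ((add_comm S.sum g₀ ▸ he))
        · have hνw' : ν w' = S.sum + w' := by simp [hν, c1', c2']
          rw [hνw, hνw'] at he
          exact sb7 hσ0 hg₀ hwσ hw'σ he
      · have hνw' : ν w' = g₀ + w' := by simp [hν, c1']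
        rw [hνw, hνw'] at he
        exact hne (add_left_cancel he)
  refine ⟨J.image ν, ?_, ?_, ?_⟩
  · rw [Finset.card_image_of_injOn hinj, hJdef, Finset.card_erase_of_mem hg₀I]
    have : 1 ≤ If.card := Finset.card_pos.mpr ⟨g₀, hg₀I⟩
    omega
  · intro v hv
    simp only [Finset.coe_image, Set.mem_image, Finset.mem_coe] at hv
    obtain ⟨w, hw, rfl⟩ := hv
    exact (good w hw).1
  · intro v hv
    simp only [Finset.mem_image] at hv
    obtain ⟨w, hw, rfl⟩ := hv
    obtain ⟨_, a, b, c⟩ := good w hw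
    exact ⟨a, b, c⟩

end EX

section Base
variable {G : Type*} [AddCommGroup G] [Fintype G] [DecidableEq G]

lemma base345 (S : Multiset G) (hND : S.Nodup) (hzsf : ZeroSumFree S)
    (h2 : ∀ g ∈ S, addOrderOf g ≠ 2) (hk3 : 3 ≤ S.card) (hk5 : S.card ≤ 5) :
    2 * S.card ≤ fseq S := by
  classical
  set σ := S.sum with hσdef
  set A := S.toFinset with hA
  set Bf := A.image (fun z => σ - z) with hB
  set If := A.filter (fun g => g + g = σ) with hI
  have hS0 : S ≠ 0 := by
    intro h0; rw [h0] at hk3; simp at hk3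
  have hAcard : A.card = S.card := Multiset.toFinset_card_of_nodup hND
  have hBcard : Bf.card = S.card := by
    rw [hB, Finset.card_image_of_injective _ sub_right_injective, hAcard]
  have hABI : A ∩ Bf = If := by
    ext g
    simp only [hI, Finset.mem_inter, Finset.mem_filter, hB, Finset.mem_image]
    constructor
    · rintro ⟨hgA, z, hzA, hze⟩
      refine ⟨hgA, ?_⟩
      rcases eq_or_ne z g with rfl | hne
      · rw [sub_eq_iff_eq_add] at hze; exact hze.symm
      · exfalso
        have hgS : g ∈ S := by rwa [hA, Multiset.mem_toFinset] at hgA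
        have hzS : z ∈ S := by rwa [hA, Multiset.mem_toFinset] at hzA
        have hple : ({g, z} : Multiset G) ≤ S := pair_le hgS hzS (Ne.symm hne)
        have := sum_ne_of_proper hzsf hple (by simp; omega)
        apply this
        simp only [Multiset.insert_eq_cons, Multiset.sum_cons, Multiset.sum_singleton]
        rw [← hze]
        abel
    · rintro ⟨hgA, hgg⟩
      exact ⟨hgA, g, hgA, by rw [← hgg]; abel⟩
  have hσA : σ ∉ A := by
    intro hmem
    rw [hA, Multiset.mem_toFinset] at hmem
    exact zsf_mem_ne_sum hzsf hmem (by omega) rfl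
  have hσB : σ ∉ Bf := by
    rw [hB]
    simp only [Finset.mem_image, not_exists]
    rintro z ⟨hzA, hze⟩
    have hzS : z ∈ S := by rwa [hA, Multiset.mem_toFinset] at hzA
    have : z = 0 := by
      have := sub_eq_self.mp hze; exact this
    exact zsf_ne_zero hzsf hzS this
  set base := insert σ (A ∪ Bf) with hbase
  have hbase_card : base.card + If.card = 2 * S.card + 1 := by
    rw [hbase, Finset.card_insert_of_notMem (by simp [hσA, hσB])]
    have := Finset.card_union_add_card_inter A Bf
    rw [hABI, hAcard, hBcard] at this
    omega
  have hbase_sub : (↑base : Set G) ⊆ SubSums S := by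
    intro v hv
    simp only [hbase, Finset.coe_insert, Set.mem_insert_iff, Finset.coe_union, Set.mem_union,
      Finset.mem_coe] at hv
    rcases hv with rfl | hv | hv
    · exact mem_subsums_sum hS0
    · rw [hA, Multiset.mem_toFinset] at hv; exact mem_subsums_single hv
    · rw [hB] at hv
      simp only [Finset.mem_image] at hv
      obtain ⟨z, hzA, rfl⟩ := hv
      rw [hA, Multiset.mem_toFinset] at hzA
      have : ({z} : Multiset G) ≤ S := by simpa using hzA
      have := mem_subsums_compl this (by simp; omega)
      simpa using this
  have hIle : If.card ≤ S.card := le_trans (Finset.card_filter_le _ _) (le_of_eq hAcard)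
  by_cases hm : If.card ≤ 1
  · -- base alone suffices
    have := card_le_fseq base hbase_sub
    omega
  -- m ≥ 2 : get two distinct elements of If
  push_neg at hm
  obtain ⟨g₀, hg₀I, h₀, hh₀I, hne₀⟩ := Finset.one_lt_card.mp hm
  have hg₀S : g₀ ∈ S := by
    have := (Finset.mem_filter.mp hg₀I).1; rwa [hA, Multiset.mem_toFinset] at this
  have hg₀σ : g₀ + g₀ = σ := (Finset.mem_filter.mp hg₀I).2
  have hh₀S : h₀ ∈ S := by
    have := (Finset.mem_filter.mp hh₀I).1; rwa [hA, Multiset.mem_toFinset] at this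
  have hh₀σ : h₀ + h₀ = σ := (Finset.mem_filter.mp hh₀I).2
  rcases eq_or_lt_of_le hk3 with hk3e | hk4
  · -- card = 3 : impossible to have m ≥ 2
    exfalso
    have hz : ∃ z, (S.erase g₀).erase h₀ = {z} := by
      rw [← Multiset.card_eq_one]
      rw [Multiset.card_erase_of_mem, Multiset.card_erase_of_mem hg₀S]
      · simp only [Nat.pred_eq_sub_one]; omega
      · rw [Multiset.mem_erase_of_ne (Ne.symm hne₀)]; exact hh₀S
    obtain ⟨z, hz⟩ := hz
    have hSeq : S = g₀ ::ₘ h₀ ::ₘ {z} := by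
      rw [← hz, Multiset.cons_erase, Multiset.cons_erase hg₀S]
      rw [Multiset.mem_erase_of_ne (Ne.symm hne₀)]; exact hh₀S
    have hzS : z ∈ S := by rw [hSeq]; simp
    have hsum : σ = g₀ + (h₀ + z) := by
      rw [hσdef, hSeq]; simp
    have hzz : z + z = 0 := by
      have : σ + σ = (g₀ + g₀) + (h₀ + h₀) + (z + z) := by rw [hsum]; abel
      rw [hg₀σ, hh₀σ] at this
      exact (left_eq_add.mp this)
    exact order_two h2 hzsf hzS hzz
  · -- 4 ≤ card ≤ 5
    obtain ⟨N, hNcard0, hNsub, hNdisj⟩ := extra S hND hzsf h2 (by omega) hk5 g₀ hg₀S hg₀σ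
    have hNcard : If.card = N.card + 1 := hNcard0
    have hdisj : Disjoint base N := by
      rw [Finset.disjoint_right]
      intro v hvN hvbase
      obtain ⟨hv1, hv2, hv3⟩ := hNdisj v hvN
      simp only [hbase, Finset.mem_insert, Finset.mem_union] at hvbase
      rcases hvbase with rfl | hv | hv
      · exact hv3 rfl
      · rw [hA, Multiset.mem_toFinset] at hv; exact hv1 hv
      · rw [hB] at hv
        simp only [Finset.mem_image] at hv
        obtain ⟨z, hzA, hze⟩ := hv
        rw [hA, Multiset.mem_toFinset] at hzA
        exact hv2 z hzA hze.symm
    have hsub : (↑(base ∪ N) : Set G) ⊆ SubSums S := by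
      rw [Finset.coe_union]
      exact Set.union_subset hbase_sub hNsub
    have := card_le_fseq (base ∪ N) hsub
    rw [Finset.card_union_of_disjoint hdisj] at this
    omega

end Base


section Assembly
variable {G : Type*} [AddCommGroup G] [Fintype G] [DecidableEq G]

lemma block_lemma : ∀ (n : ℕ) (B : Multiset G), Multiset.card B ≤ n → B.Nodup →
    ZeroSumFree B → (∀ g ∈ B, addOrderOf g ≠ 2) → 3 ≤ Multiset.card B →
    2 * Multiset.card B ≤ fseq B := by
  intro n
  induction n with
  | zero => intro B hle _ _ _ hk; omega
  | succ n ih =>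
    intro B hle hND hzsf h2 hk
    by_cases h5 : Multiset.card B ≤ 5
    · exact base345 B hND hzsf h2 hk h5
    push_neg at h5
    -- split off a triple
    have h0 : B ≠ 0 := by intro h; rw [h] at hk; simp at hk
    obtain ⟨a, haB⟩ := Multiset.exists_mem_of_ne_zero h0
    have h10 : B.erase a ≠ 0 := by
      intro h
      have := Multiset.card_erase_of_mem haB
      rw [h] at this; simp at this; omega
    obtain ⟨b, hbB1⟩ := Multiset.exists_mem_of_ne_zero h10
    have h20 : (B.erase a).erase b ≠ 0 := by
      intro h
      have h1 := Multiset.card_erase_of_mem haB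
      have h2' := Multiset.card_erase_of_mem hbB1
      rw [h] at h2'; simp at h2'
      simp [Nat.pred_eq_sub_one] at h1 h2'; omega
    obtain ⟨c, hcB2⟩ := Multiset.exists_mem_of_ne_zero h20
    have hbB : b ∈ B := Multiset.mem_of_mem_erase hbB1
    have hcB1 : c ∈ B.erase a := Multiset.mem_of_mem_erase hcB2
    have hcB : c ∈ B := Multiset.mem_of_mem_erase hcB1
    have hab : a ≠ b := by
      intro h; rw [← h] at hbB1
      exact (Multiset.Nodup.notMem_erase hND) hbB1
    have hac : a ≠ c := by
      intro h; rw [← h] at hcB1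
      exact (Multiset.Nodup.notMem_erase hND) hcB1
    have hbc : b ≠ c := by
      intro h; rw [← h] at hcB2
      exact (Multiset.Nodup.notMem_erase (Multiset.Nodup.erase a hND)) hcB2
    set T : Multiset G := {a, b, c} with hT
    have hTnd : T.Nodup := by
      simp only [hT, Multiset.insert_eq_cons, Multiset.nodup_cons, Multiset.mem_cons,
        Multiset.mem_singleton, Multiset.nodup_singleton, and_true]
      push_neg
      exact ⟨⟨hab, hac⟩, hbc⟩
    have hTle : T ≤ B := by
      apply nodup_sub_le hND hTnd
      intro w hw
      simp only [hT, Multiset.insert_eq_cons, Multiset.mem_cons, Multiset.mem_singleton] at hw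
      rcases hw with rfl|rfl|rfl <;> assumption
    have hTcard : Multiset.card T = 3 := by simp [hT]
    have hBeq : B = T + (B - T) := by
      rw [add_comm]
      exact (tsub_add_cancel_of_le hTle).symm
    have hcardsub : Multiset.card (B - T) + 3 = Multiset.card B := by
      have := congrArg Multiset.card hBeq
      rw [Multiset.card_add, hTcard] at this
      omega
    have hzsf' : ZeroSumFree (T + (B - T)) := by rw [← hBeq]; exact hzsf
    have hsup := fseq_superadd hzsf'
    have hfT : 2 * 3 ≤ fseq T := by
      have := base345 T hTnd (zsf_mono hTle hzsf)
        (fun g hg => h2 g (Multiset.mem_of_le hTle hg)) (by omega) (by omega)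
      rwa [hTcard] at this
    have hfR : 2 * Multiset.card (B - T) ≤ fseq (B - T) := by
      apply ih (B - T) (by omega) (Multiset.nodup_of_le tsub_le_self hND)
        (zsf_mono tsub_le_self hzsf)
        (fun g hg => h2 g (Multiset.mem_of_le tsub_le_self hg))
        (by omega)
    have hfB : fseq B = fseq (T + (B - T)) := by rw [← hBeq]
    rw [hfB]
    omega

lemma list_version (L : List (Multiset G)) (hblocks : ∀ B ∈ L, B.Nodup ∧ 3 ≤ Multiset.card B)
    (hzsf : ZeroSumFree L.sum) (h2 : ∀ g ∈ L.sum, addOrderOf g ≠ 2) :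
    2 * Multiset.card L.sum ≤ fseq L.sum := by
  induction L with
  | nil => simp
  | cons B L ih =>
    rw [List.sum_cons] at hzsf h2 ⊢
    have hsup := fseq_superadd hzsf
    have hB := hblocks B (by simp)
    have hfB : 2 * Multiset.card B ≤ fseq B :=
      block_lemma (Multiset.card B) B le_rfl hB.1
        (zsf_mono (le_add_right _ _) hzsf)
        (fun g hg => h2 g (Multiset.mem_of_le (le_add_right _ _) hg)) hB.2
    have hfL : 2 * Multiset.card L.sum ≤ fseq L.sum := by
      apply ih (fun C hC => hblocks C (by simp [hC]))
        (zsf_mono (le_add_left _ _) hzsf)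
        (fun g hg => h2 g (Multiset.mem_of_le (le_add_left _ _) hg))
    rw [Multiset.card_add]
    omega

end Assembly



/-- If `S` is zero-sum free, contains no element of order `2`, and decomposes as
`S = S₁⋯S_x` with each `Sᵢ` squarefree of length `≥ 3`, then `f(S) ≥ 2|S|`. -/
theorem stmt19 {G : Type*} [AddCommGroup G] [Fintype G] (S : Multiset G)
    (hS : ZeroSumFree S) (h2 : ∀ g ∈ S, addOrderOf g ≠ 2)
    (x : ℕ) (hx : 1 ≤ x) (T : Fin x → Multiset G)
    (hdec : S = ∑ i : Fin x, T i)
    (hT : ∀ i : Fin x, (T i).Nodup ∧ 3 ≤ (T i).card) :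
    2 * S.card ≤ fseq S := by
  classical
  have hL : S = (List.ofFn T).sum := by
    rw [hdec, List.sum_ofFn]
  rw [hL] at hS h2 ⊢
  apply list_version (List.ofFn T) ?_ hS h2
  intro B hB
  rw [List.mem_ofFn] at hB
  obtain ⟨i, rfl⟩ := hB
  exact hT i
end
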